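/- arXiv:1008.2047 — 2 statements merged into one kernel-verified Lean document; each statement's English description precedes it below -/
import Mathlib

section
/- Let K be a knot in S^3 and h ∈ M(K). If a_1, …, a_m denote the numbers of intersections of K with the thick levels of h and b_1, …, b_{m-1} denote the numbers of intersections of K with the thin levels of h, then w(h) = (1/2)(Σ_{i=1}^m a_i² − Σ_{i=1}^{m-1} b_i²). -/
open scoped Manifold Topology
open Metric Set Topology

noncomputable section

/-! ### Basic spaces -/

/-- The 3-sphere `S³`, realized as the unit sphere in `ℝ⁴`. -/
abbrev S3 : Type := Metric.sphere (0 : EuclideanSpace ℝ (Fin 4)) 1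

/-- The closed unit disk in `ℂ`, model for a 2-disk. -/
def Disk2 : Set ℂ := Metric.closedBall 0 1

/-- A standard annulus in `ℂ`. -/
def Annulus2 : Set ℂ := {z : ℂ | 1 ≤ ‖z‖ ∧ ‖z‖ ≤ 2}

/-- A subset of `S³` is a knot if it is homeomorphic to the circle. -/
def IsKnot (K : Set S3) : Prop := Nonempty (K ≃ₜ Circle)

/-- A subset of `S³` which is a (topological) torus surface. -/
def IsTorusSurface (T : Set S3) : Prop := Nonempty (T ≃ₜ (Circle × Circle))

/-- A subset of `S³` homeomorphic to a circle (a simple closed curve). -/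
def IsCircleSet (s : Set S3) : Prop := Nonempty (s ≃ₜ Circle)

/-- A subset of `S³` homeomorphic to a closed 3-ball. -/
def IsBall3 (B : Set S3) : Prop :=
  Nonempty (B ≃ₜ (Metric.closedBall (0 : EuclideanSpace ℝ (Fin 3)) 1))

/-- A subset of `S³` homeomorphic to a solid torus. -/
def IsSolidTorusSet (V : Set S3) : Prop := Nonempty (V ≃ₜ (Circle × ↥Disk2))

/-- Ambient isotopy of subsets of `S³`: a continuous family of homeomorphisms starting
at the identity carrying `A` onto `B`. -/
def AmbientIsotopic (A B : Set S3) : Prop :=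
  ∃ F : C(ℝ × S3, S3), (∀ x, F (0, x) = x) ∧ (∀ t, IsHomeomorph fun x => F (t, x)) ∧
    (fun x => F (1, x)) '' A = B

/-- The standard (round) unknot in `S³`: a great circle. -/
def stdUnknot : Set S3 :=
  {x : S3 | (x : EuclideanSpace ℝ (Fin 4)) 2 = 0 ∧ (x : EuclideanSpace ℝ (Fin 4)) 3 = 0}

/-- `D` is an embedded disk in `S³` with boundary the curve `s`. -/
def IsDiskWithBoundary (D s : Set S3) : Prop :=
  ∃ f : ℂ → S3, ContinuousOn f Disk2 ∧ Set.InjOn f Disk2 ∧ f '' Disk2 = D ∧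
    f '' Metric.sphere (0 : ℂ) 1 = s

/-- The curve `s` bounds a disk contained in `A`. -/
def BoundsDiskIn (s A : Set S3) : Prop := ∃ D, D ⊆ A ∧ IsDiskWithBoundary D s

/-- Two curves cobound an embedded annulus inside `W` (are parallel in `W`). -/
def CoboundAnnulusIn (γ₁ γ₂ W : Set S3) : Prop :=
  ∃ f : ℂ → S3, ContinuousOn f Annulus2 ∧ Set.InjOn f Annulus2 ∧ f '' Annulus2 ⊆ W ∧
    f '' Metric.sphere (0 : ℂ) 1 = γ₁ ∧ f '' Metric.sphere (0 : ℂ) 2 = γ₂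

/-! ### Morse functions on `S³` adapted to a knot -/

/-- `h : S³ → ℝ` is smooth with exactly two critical points on `S³`. -/
def SmoothTwoCrit (h : S3 → ℝ) : Prop :=
  ContMDiff (𝓡 3) 𝓘(ℝ, ℝ) (⊤ : ℕ∞) h ∧
    {x : S3 | mfderiv (𝓡 3) 𝓘(ℝ, ℝ) h x = 0}.ncard = 2

/-- An element of `𝓜(K)`: a Morse function `h` on `S³` with exactly two critical points
such that `h` restricted to the knot `K` is Morse, together with the (finitely many,
distinct) critical values `c 0 < c 1 < ⋯ < c n` of `h|_K`.  Since `h|_K` is a Morse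
function on a circle, its critical points are precisely its local extrema on `K`. -/
structure KnotMorse (K : Set S3) where
  /-- the underlying Morse function on `S³` -/
  h : S3 → ℝ
  smooth_twoCrit : SmoothTwoCrit h
  /-- `h|_K` has `n + 1` critical points/values -/
  n : ℕ
  /-- the critical values of `h|_K` -/
  c : Fin (n + 1) → ℝ
  c_mono : StrictMono c
  /-- each critical value is realized by exactly one critical point of `h|_K` -/
  crit_exists : ∀ i, ∃! x, x ∈ K ∧ IsLocalExtrOn h K x ∧ h x = c i
  /-- every critical point of `h|_K` has one of the listed critical values -/
  crit_complete : ∀ x ∈ K, IsLocalExtrOn h K x → ∃ i, h x = c i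
  /-- the knot lies between the lowest and highest critical levels -/
  between : ∀ x ∈ K, c 0 ≤ h x ∧ h x ≤ c (Fin.last n)
  /-- regular level sets of `h|_K` are finite -/
  level_finite : ∀ r : ℝ, (∀ i, r ≠ c i) → (K ∩ h ⁻¹' {r}).Finite

namespace KnotMorse

variable {K : Set S3} (m : KnotMorse K)

/-- A regular value `r_{i+1}` with `c i < r_{i+1} < c (i+1)`. -/
def midpt (i : Fin m.n) : ℝ := (m.c i.castSucc + m.c i.succ) / 2

/-- `|K ∩ h⁻¹(r_{i+1})|`, the number of intersections with the `i`-th regular level. -/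
def cnt (i : Fin m.n) : ℕ := (K ∩ m.h ⁻¹' {m.midpt i}).ncard

/-- The width `w(h) = Σᵢ |K ∩ h⁻¹(rᵢ)|`. -/
def width : ℕ := ∑ i, m.cnt i

/-- The bridge number `b(h) = (n+1)/2`, the number of maxima of `h|_K`. -/
def bridge : ℕ := (m.n + 1) / 2

/-- The trunk `trunk(h) = maxᵢ |K ∩ h⁻¹(rᵢ)|`. -/
def trunk : ℕ := Finset.univ.sup fun i => m.cnt i

end KnotMorse

/-- The width `w(K)` of a knot. -/
def knotWidth (K : Set S3) : ℕ := sInf {w | ∃ m : KnotMorse K, m.width = w}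

/-- The bridge number `b(K)` of a knot. -/
def knotBridge (K : Set S3) : ℕ := sInf {b | ∃ m : KnotMorse K, m.bridge = b}

/-- The trunk `trunk(K)` of a knot. -/
def knotTrunk (K : Set S3) : ℕ := sInf {t | ∃ m : KnotMorse K, m.trunk = t}

/-- `h` is a thin position for `K` if it realizes the width. -/
def KnotMorse.IsThinPosition {K : Set S3} (m : KnotMorse K) : Prop := m.width = knotWidth K

/-- `h` is a bridge position for `K` if it realizes the bridge number and all maxima of
`h|_K` occur above all minima. -/
def KnotMorse.IsBridgePosition {K : Set S3} (m : KnotMorse K) : Prop :=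
  m.bridge = knotBridge K ∧
    ∀ x ∈ K, ∀ y ∈ K, IsLocalMaxOn m.h K x → IsLocalMinOn m.h K y → m.h y < m.h x

/-! ### The solid torus, patterns, winding number, satellites -/

/-- The standard solid torus `V = S¹ × D²`. -/
abbrev STS : Type := Circle × ↥Disk2

/-- The core circle `S¹ × {0}` of the standard solid torus. -/
def stsCore : Set STS := {p | (p.2 : ℂ) = 0}

/-- The boundary torus `S¹ × ∂D²` of the standard solid torus. -/
def stsBoundary : Set STS := {p | ‖(p.2 : ℂ)‖ = 1}

/-- The meridian disk `{z} × D²` of the standard solid torus. -/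
def meridianDisk (z : Circle) : Set STS := {p | p.1 = z}

/-- A continuous map `f` of the circle to itself has degree `d`, expressed via a lift along
the universal covering `Circle.exp : ℝ → S¹`. -/
def CircleMapDegree (f : Circle → Circle) (d : ℤ) : Prop :=
  ∃ g : ℝ → ℝ, Continuous g ∧ (∀ t, f (Circle.exp t) = Circle.exp (g t)) ∧
    ∀ t, g (t + 2 * Real.pi) = g t + d * (2 * Real.pi)

/-- The pattern `P ⊆ S¹ × D²` has winding number `w`: the absolute algebraic intersection
number of a meridian disk with `P`, i.e. the absolute degree of the composition of a
parametrization of `P` with the retraction onto the core. -/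
def PatternWinding (P : Set STS) (w : ℕ) : Prop :=
  ∃ α : Circle → STS, IsEmbedding α ∧ Set.range α = P ∧
    ∃ d : ℤ, d.natAbs = w ∧ CircleMapDegree (fun z => (α z).1) d

/-- The pattern `P` is a braid of index `n`: the solid torus admits a foliation (here, the
image of the product foliation under a self-homeomorphism of `S¹ × D²`) each of whose
leaves is a meridian disk meeting `P` exactly `n` times. -/
def IsBraidOfIndex (P : Set STS) (n : ℕ) : Prop :=
  ∃ F : STS ≃ₜ STS, ∀ z : Circle, ((F '' meridianDisk z) ∩ P).ncard = n

/-- A satellite structure on a knot `K ⊆ S³`: a pattern knot `P` in the standard solid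
torus meeting every meridian disk, an embedding `φ` of the solid torus into `S³` with
`φ(P) = K`, whose core maps to a nontrivial companion knot `J`. -/
structure SatelliteStructure (K : Set S3) where
  /-- the pattern `K̂` -/
  P : Set STS
  P_knot : Nonempty (P ≃ₜ Circle)
  /-- every meridian disk of the solid torus meets the pattern -/
  P_meridional : ∀ z : Circle, (meridianDisk z ∩ P).Nonempty
  /-- the embedding of the solid torus into `S³` -/
  φ : STS → S3
  φ_emb : IsEmbedding φ
  image_eq : φ '' P = K
  /-- the companion knot `J` -/
  J : Set S3
  J_knot : IsKnot J
  /-- the companion is a nontrivial knot -/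
  J_nontrivial : ¬ AmbientIsotopic J stdUnknot
  /-- the core of the solid torus maps to a knot isotopic to the companion -/
  core_isotopic : AmbientIsotopic (φ '' stsCore) J

namespace SatelliteStructure

variable {K : Set S3} (s : SatelliteStructure K)

/-- The knotted solid torus `V = φ(S¹ × D²) ⊆ S³` containing `K`. -/
def V : Set S3 := Set.range s.φ

/-- The companion torus `T = ∂V`. -/
def Tb : Set S3 := s.φ '' stsBoundary

end SatelliteStructure

/-! ### Saddles and the singular foliation of a surface -/

/-- `x` is a saddle point of the singular foliation of `T` induced by `h`: the leaf
through `x` (the connected component of the level set of `h|_T` containing `x`) has a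
component which is a wedge of two circles `s₁` and `s₂` meeting exactly at `x`. -/
def IsSaddlePt (h : S3 → ℝ) (T : Set S3) (x : S3) : Prop :=
  x ∈ T ∧ ∃ s₁ s₂ : Set S3, IsCircleSet s₁ ∧ IsCircleSet s₂ ∧ s₁ ∩ s₂ = {x} ∧
    s₁ ∪ s₂ = connectedComponentIn (T ∩ h ⁻¹' {h x}) x

/-- `x` is an inessential saddle of the singular foliation of `T` induced by `h`: a saddle
point one of whose wedge circles is inessential in `T` (bounds a disk in `T`). -/
def IsInessentialSaddle (h : S3 → ℝ) (T : Set S3) (x : S3) : Prop :=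
  x ∈ T ∧ ∃ s₁ s₂ : Set S3, IsCircleSet s₁ ∧ IsCircleSet s₂ ∧ s₁ ∩ s₂ = {x} ∧
    s₁ ∪ s₂ = connectedComponentIn (T ∩ h ⁻¹' {h x}) x ∧
    (BoundsDiskIn s₁ T ∨ BoundsDiskIn s₂ T)

/-- `h` restricted to the surface `T` is Morse (in particular it has finitely many
critical points: local extrema and saddles). -/
def MorseOn (h : S3 → ℝ) (T : Set S3) : Prop :=
  {x ∈ T | IsLocalExtrOn h T x ∨ IsSaddlePt h T x}.Finite

/-- `r` is a regular value of `h` restricted to `A`: no critical points (local extrema or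
saddle points of the induced foliation) occur at level `r`. -/
def IsRegularValueOn (h : S3 → ℝ) (A : Set S3) (r : ℝ) : Prop :=
  ∀ x ∈ A, h x = r → ¬(IsLocalExtrOn h A x ∨ IsSaddlePt h A x)

/-! ### The essential connectivity graph -/

/-- The curves `γ₁, …, γ_n`: connected components of `h⁻¹(r) ∩ T`. -/
def levelCurves (h : S3 → ℝ) (T : Set S3) (r : ℝ) : Set (Set S3) :=
  {γ | ∃ x ∈ h ⁻¹' {r} ∩ T, γ = connectedComponentIn (h ⁻¹' {r} ∩ T) x}

/-- The regions `R₁, …, R_m` obtained by cutting the level sphere `h⁻¹(r)` along the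
curves of `h⁻¹(r) ∩ T`: closures of the connected components of the complement. -/
def levelRegions (h : S3 → ℝ) (T : Set S3) (r : ℝ) : Set (Set S3) :=
  {R | ∃ x ∈ h ⁻¹' {r} \ T, R = closure (connectedComponentIn (h ⁻¹' {r} \ T) x)}

/-- The essential curves in the boundary of a region `R` which join `R` to another region;
these are the edges of the essential connectivity graph incident to the vertex `R`. -/
def essEdgesAt (h : S3 → ℝ) (T : Set S3) (r : ℝ) (R : Set S3) : Set (Set S3) :=
  {γ ∈ levelCurves h T r | ¬ BoundsDiskIn γ T ∧
    ∃ R' ∈ levelRegions h T r, R' ≠ R ∧ γ = R ∩ R'}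

/-- `R` is an endpoint of the essential connectivity graph `Γ_r`: a vertex incident to
exactly one edge. -/
def IsEndpointRegion (h : S3 → ℝ) (T : Set S3) (r : ℝ) (R : Set S3) : Prop :=
  R ∈ levelRegions h T r ∧ (essEdgesAt h T r R).ncard = 1

/-- The trunk of the level 2-sphere `h⁻¹(r)`: the number of endpoints of `Γ_r`. -/
def trunkAt (h : S3 → ℝ) (T : Set S3) (r : ℝ) : ℕ :=
  {R | IsEndpointRegion h T r R}.ncard

/-- The essential connectivity graph `Γ_r`: vertices are the regions of `h⁻¹(r)` cut along
`h⁻¹(r) ∩ T`, and two regions are adjacent when they meet along a curve that is essential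
in `T`. -/
def connGraph (h : S3 → ℝ) (T : Set S3) (r : ℝ) : SimpleGraph (levelRegions h T r) where
  Adj R R' := R ≠ R' ∧ ∃ γ ∈ levelCurves h T r, ¬ BoundsDiskIn γ T ∧
    γ = (R : Set S3) ∩ (R' : Set S3)
  symm := by
    constructor
    rintro R R' ⟨hne, γ, hγ, hess, heq⟩
    exact ⟨hne.symm, γ, hγ, hess, by rw [heq, Set.inter_comm]⟩
  loopless := by constructor; rintro R ⟨hne, -⟩; exact hne rfl

/-- The regular level `rᵢ` of `h|_K` indexed by `i` is a **thick level**: it meets `K`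
strictly more than each adjacent regular level (boundary local maxima of the sequence of
intersection numbers also count as thick levels). -/
def KnotMorse.ThickIdx {K : Set S3} (m : KnotMorse K) (i : Fin m.n) : Prop :=
  (∀ j : Fin m.n, (j : ℕ) + 1 = (i : ℕ) → m.cnt j < m.cnt i) ∧
  (∀ j : Fin m.n, (i : ℕ) + 1 = (j : ℕ) → m.cnt j < m.cnt i)

/-- The regular level `rᵢ` of `h|_K` indexed by `i` (with `1 < i < n`) is a
**thin level**: it meets `K` strictly less than each adjacent regular level. -/
def KnotMorse.ThinIdx {K : Set S3} (m : KnotMorse K) (i : Fin m.n) : Prop :=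
  0 < (i : ℕ) ∧ (i : ℕ) + 1 < m.n ∧
  (∀ j : Fin m.n, (j : ℕ) + 1 = (i : ℕ) → m.cnt i < m.cnt j) ∧
  (∀ j : Fin m.n, (i : ℕ) + 1 = (j : ℕ) → m.cnt i < m.cnt j)


section PartA

def thkP (n : ℕ) (c : ℕ → ℤ) (i : ℕ) : Prop :=
  (i = 0 ∨ c (i-1) < c i) ∧ (i+1 = n ∨ c (i+1) < c i)

def thnP (n : ℕ) (c : ℕ → ℤ) (i : ℕ) : Prop :=
  0 < i ∧ i+1 < n ∧ c i < c (i-1) ∧ c i < c (i+1)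

open Classical in
lemma partA (n : ℕ) (hn : 0 < n) (c : ℕ → ℤ)
    (hstep : ∀ j, j+1 < n → c (j+1) = c j + 2 ∨ c (j+1) = c j - 2)
    (h0 : c 0 = 2) (hl : c (n-1) = 2) :
    2 * (∑ i ∈ Finset.range n, c i) =
      (∑ i ∈ Finset.range n, if thkP n c i then c i ^ 2 else 0) -
      (∑ i ∈ Finset.range n, if thnP n c i then c i ^ 2 else 0) := by
  set P : ℕ → ℤ := fun i => if 0 < i then (c i - c (i-1)) * c i ^ 2 else 2 * c i ^ 2 with hP
  set Q : ℕ → ℤ := fun i => if i+1 < n then (c (i+1) - c i) * c i ^ 2 else -2 * c i ^ 2 with hQ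
  obtain ⟨n', rfl⟩ : ∃ n', n = n' + 1 := ⟨n - 1, by omega⟩
  have key : ∀ i ∈ Finset.range (n'+1),
      4 * ((if thkP (n'+1) c i then c i ^ 2 else 0) - (if thnP (n'+1) c i then c i ^ 2 else 0))
        = P i - Q i := by
    intro i hi
    simp only [Finset.mem_range] at hi
    rcases Nat.eq_zero_or_pos i with rfl | hipos
    · have hthn : ¬ thnP (n'+1) c 0 := by rintro ⟨h, -⟩; omega
      rw [if_neg hthn]
      rcases Nat.eq_or_lt_of_le (Nat.one_le_iff_ne_zero.2 (by omega : n'+1 ≠ 0)) with h1 | h1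
      · have hthk : thkP (n'+1) c 0 := ⟨Or.inl rfl, Or.inl (by omega)⟩
        rw [if_pos hthk]
        simp only [hP, hQ, if_neg (lt_irrefl 0), if_neg (by omega : ¬ (0+1 < n'+1))]
        ring
      · rcases hstep 0 (by omega) with hs | hs
        · have hthk : ¬ thkP (n'+1) c 0 := by
            rintro ⟨-, h2 | h2⟩ <;> omega
          rw [if_neg hthk]
          simp only [hP, hQ, if_neg (lt_irrefl 0), if_pos (by omega : 0+1 < n'+1)]
          rw [hs]; ring
        · have hthk : thkP (n'+1) c 0 := ⟨Or.inl rfl, Or.inr (by omega)⟩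
          rw [if_pos hthk]
          simp only [hP, hQ, if_neg (lt_irrefl 0), if_pos (by omega : 0+1 < n'+1)]
          rw [hs]; ring
    · have hstepl := hstep (i-1) (by omega)
      have hi1 : i - 1 + 1 = i := by omega
      rw [hi1] at hstepl
      rcases Nat.eq_or_lt_of_le (by omega : i + 1 ≤ n' + 1) with hlast | hlast
      · -- i is the last index
        have hQi : Q i = -2 * c i ^ 2 := by simp only [hQ]; rw [if_neg (by omega)]
        have hPi : P i = (c i - c (i-1)) * c i ^ 2 := by simp only [hP]; rw [if_pos hipos]
        have hthn : ¬ thnP (n'+1) c i := by rintro ⟨-, h2, -⟩; omega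
        rw [if_neg hthn]
        rcases hstepl with hs | hs
        · have hthk : thkP (n'+1) c i := ⟨Or.inr (by omega), Or.inl hlast⟩
          rw [if_pos hthk, hPi, hQi, hs]; ring
        · have hthk : ¬ thkP (n'+1) c i := by rintro ⟨h1 | h1, -⟩ <;> omega
          rw [if_neg hthk, hPi, hQi, hs]; ring
      · -- interior
        have hstepr := hstep i (by omega)
        have hQi : Q i = (c (i+1) - c i) * c i ^ 2 := by simp only [hQ]; rw [if_pos (by omega)]
        have hPi : P i = (c i - c (i-1)) * c i ^ 2 := by simp only [hP]; rw [if_pos hipos]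
        rcases hstepl with hsl | hsl <;> rcases hstepr with hsr | hsr
        · -- up, up : neither
          have hthk : ¬ thkP (n'+1) c i := by rintro ⟨-, h2 | h2⟩ <;> omega
          have hthn : ¬ thnP (n'+1) c i := by rintro ⟨-, -, h3, -⟩; omega
          rw [if_neg hthk, if_neg hthn, hPi, hQi, hsr, hsl]; ring
        · -- up, down : thick
          have hthk : thkP (n'+1) c i := ⟨Or.inr (by omega), Or.inr (by omega)⟩
          have hthn : ¬ thnP (n'+1) c i := by rintro ⟨-, -, h3, -⟩; omega
          rw [if_pos hthk, if_neg hthn, hPi, hQi, hsr, hsl]; ring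
        · -- down, up : thin
          have hthk : ¬ thkP (n'+1) c i := by rintro ⟨h1 | h1, -⟩ <;> omega
          have hthn : thnP (n'+1) c i := ⟨hipos, by omega, by omega, by omega⟩
          rw [if_neg hthk, if_pos hthn, hPi, hQi, hsr, hsl]; ring
        · -- down, down : neither
          have hthk : ¬ thkP (n'+1) c i := by rintro ⟨h1 | h1, -⟩ <;> omega
          have hthn : ¬ thnP (n'+1) c i := by rintro ⟨-, -, -, h4⟩; omega
          rw [if_neg hthk, if_neg hthn, hPi, hQi, hsr, hsl]; ring
  have hsum : 4 * ((∑ i ∈ Finset.range (n'+1), if thkP (n'+1) c i then c i ^ 2 else 0) -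
      (∑ i ∈ Finset.range (n'+1), if thnP (n'+1) c i then c i ^ 2 else 0))
      = ∑ i ∈ Finset.range (n'+1), (P i - Q i) := by
    rw [mul_sub, Finset.mul_sum, Finset.mul_sum, ← Finset.sum_sub_distrib]
    exact Finset.sum_congr rfl (fun i hi => by have := key i hi; linarith)
  have hPsum : ∑ i ∈ Finset.range (n'+1), P i = 8 + ∑ j ∈ Finset.range n', (c (j+1) - c j) * c (j+1) ^ 2 := by
    rw [Finset.sum_range_succ']
    simp only [hP, if_neg (lt_irrefl 0), if_pos (Nat.succ_pos _), h0, Nat.add_sub_cancel]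
    ring
  have hQsum : ∑ i ∈ Finset.range (n'+1), Q i = (∑ j ∈ Finset.range n', (c (j+1) - c j) * c j ^ 2) - 8 := by
    rw [Finset.sum_range_succ]
    have h1 : Q n' = -2 * c n' ^ 2 := by simp only [hQ]; rw [if_neg (by omega)]
    have h2 : c n' = 2 := by simpa using hl
    rw [h1, h2]
    have h3 : ∀ j ∈ Finset.range n', Q j = (c (j+1) - c j) * c j ^ 2 := by
      intro j hj
      simp only [Finset.mem_range] at hj
      simp only [hQ]; rw [if_pos (by omega)]
    rw [Finset.sum_congr rfl h3]
    ring
  have hdiff : ∀ j ∈ Finset.range n',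
      (c (j+1) - c j) * c (j+1) ^ 2 - (c (j+1) - c j) * c j ^ 2 = 4 * (c j + c (j+1)) := by
    intro j hj
    simp only [Finset.mem_range] at hj
    rcases hstep j (by omega) with hs | hs <;> rw [hs] <;> ring
  have htel : (∑ j ∈ Finset.range n', (c (j+1) - c j) * c (j+1) ^ 2)
      - (∑ j ∈ Finset.range n', (c (j+1) - c j) * c j ^ 2)
      = 4 * ((∑ i ∈ Finset.range (n'+1), c i) - c 0) + 4 * ((∑ i ∈ Finset.range (n'+1), c i) - c n') := by
    rw [← Finset.sum_sub_distrib, Finset.sum_congr rfl hdiff]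
    have e1 : ∑ i ∈ Finset.range (n'+1), c i = (∑ j ∈ Finset.range n', c (j+1)) + c 0 :=
      Finset.sum_range_succ' c n'
    have e2 : ∑ i ∈ Finset.range (n'+1), c i = (∑ j ∈ Finset.range n', c j) + c n' :=
      Finset.sum_range_succ c n'
    have e3 : ∑ x ∈ Finset.range n', 4 * (c x + c (x + 1))
        = 4 * (∑ x ∈ Finset.range n', c x) + 4 * (∑ x ∈ Finset.range n', c (x+1)) := by
      rw [Finset.mul_sum, Finset.mul_sum, ← Finset.sum_add_distrib]
      exact Finset.sum_congr rfl (fun _ _ => by ring)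
    rw [e3]
    linarith [e1, e2]
  have h2 : c n' = 2 := by simpa using hl
  have final : (4:ℤ) * (2 * ∑ i ∈ Finset.range (n'+1), c i) =
      4 * ((∑ i ∈ Finset.range (n'+1), if thkP (n'+1) c i then c i ^ 2 else 0) -
      (∑ i ∈ Finset.range (n'+1), if thnP (n'+1) c i then c i ^ 2 else 0)) := by
    rw [hsum, Finset.sum_sub_distrib, hPsum, hQsum]
    linarith [htel, h0, h2]
  linarith [final]

end PartA


section Helpers

open Set Filter Topology

lemma noextr_mono {g : ℝ → ℝ} (hg : Continuous g) {a b : ℝ} (hab : a < b)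
    (hne : ∀ t ∈ Ioo a b, ¬ IsLocalExtr g t) :
    StrictMonoOn g (Icc a b) ∨ StrictAntiOn g (Icc a b) := by
  apply ContinuousOn.strictMonoOn_of_injOn_Icc' hab.le hg.continuousOn
  have key : ∀ s t, s ∈ Icc a b → t ∈ Icc a b → s < t → g s = g t → False := by
    intro s t hs ht hst hgst
    obtain ⟨u, hu, humax⟩ := isCompact_Icc.exists_isMaxOn (nonempty_Icc.2 hst.le)
      hg.continuousOn
    obtain ⟨v, hv, hvmin⟩ := isCompact_Icc.exists_isMinOn (nonempty_Icc.2 hst.le)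
      hg.continuousOn
    by_cases hus : g u = g s
    · by_cases hvs : g v = g s
      · -- g is constant on Icc s t
        set w := (s + t) / 2 with hw
        have hw1 : s < w := by simp only [hw]; linarith
        have hw2 : w < t := by simp only [hw]; linarith
        refine hne w ⟨lt_of_le_of_lt hs.1 hw1, lt_of_lt_of_le hw2 ht.2⟩ (Or.inr ?_)
        have hconst : ∀ z ∈ Icc s t, g z = g s := by
          intro z hz
          have h1 := humax hz
          have h2 := hvmin hz
          simp only [mem_setOf_eq] at h1 h2
          rw [hus] at h1; rw [hvs] at h2
          linarith
        have : IsMaxOn g (Icc s t) w := by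
          intro z hz
          simp only [mem_setOf_eq]
          rw [hconst z hz, hconst w ⟨hw1.le, hw2.le⟩]
        exact this.isLocalMax (Icc_mem_nhds hw1 hw2)
      · -- min attained at interior point
        have hvs' : v ≠ s := fun h => hvs (by rw [h])
        have hvt : v ≠ t := fun h => hvs (by rw [h, hgst])
        have hv1 : s < v := lt_of_le_of_ne hv.1 (Ne.symm hvs')
        have hv2 : v < t := lt_of_le_of_ne hv.2 hvt
        refine hne v ⟨lt_of_le_of_lt hs.1 hv1, lt_of_lt_of_le hv2 ht.2⟩
          (Or.inl (hvmin.isLocalMin (Icc_mem_nhds hv1 hv2)))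
    · have hus' : u ≠ s := fun h => hus (by rw [h])
      have hut : u ≠ t := fun h => hus (by rw [h, hgst])
      have hu1 : s < u := lt_of_le_of_ne hu.1 (Ne.symm hus')
      have hu2 : u < t := lt_of_le_of_ne hu.2 hut
      refine hne u ⟨lt_of_le_of_lt hs.1 hu1, lt_of_lt_of_le hu2 ht.2⟩
        (Or.inr (humax.isLocalMax (Icc_mem_nhds hu1 hu2)))
  intro s hs t ht hst
  rcases lt_trichotomy s t with h | h | h
  · exact absurd hst (fun hh => key s t hs ht h hh)
  · exact h
  · exact absurd hst (fun hh => key t s ht hs h hh.symm)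

lemma arc_count {g : ℝ → ℝ} (hg : Continuous g) {a b r : ℝ} (hab : a < b)
    (hmono : StrictMonoOn g (Icc a b) ∨ StrictAntiOn g (Icc a b)) :
    {t | t ∈ Ioo a b ∧ g t = r}.ncard
      = if (g a < r ∧ r < g b) ∨ (g b < r ∧ r < g a) then 1 else 0 := by
  have hamem : a ∈ Icc a b := ⟨le_refl a, hab.le⟩
  have hbmem : b ∈ Icc a b := ⟨hab.le, le_refl b⟩
  by_cases hc : (g a < r ∧ r < g b) ∨ (g b < r ∧ r < g a)
  · rw [if_pos hc]
    rcases hmono with hm | hm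
    · have hgab : g a < g b := hm hamem hbmem hab
      have hc' : g a < r ∧ r < g b := by
        rcases hc with h | h
        · exact h
        · exact absurd hgab (by push_neg; linarith [h.1, h.2])
      obtain ⟨t₀, ht₀, hgt₀⟩ := intermediate_value_Ioo hab.le hg.continuousOn
        (mem_Ioo.2 hc')
      rw [Set.ncard_eq_one]
      refine ⟨t₀, Set.ext fun t => ⟨fun ⟨htI, hgt⟩ => ?_, fun h => by
        rw [h]; exact ⟨ht₀, hgt₀⟩⟩⟩
      exact hm.injOn (Ioo_subset_Icc_self htI) (Ioo_subset_Icc_self ht₀)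
        (by rw [hgt, hgt₀])
    · have hgab : g b < g a := hm hamem hbmem hab
      have hc' : g b < r ∧ r < g a := by
        rcases hc with h | h
        · exact absurd hgab (by push_neg; linarith [h.1, h.2])
        · exact h
      obtain ⟨t₀, ht₀, hgt₀⟩ := intermediate_value_Ioo' hab.le hg.continuousOn
        (mem_Ioo.2 hc')
      rw [Set.ncard_eq_one]
      refine ⟨t₀, Set.ext fun t => ⟨fun ⟨htI, hgt⟩ => ?_, fun h => by
        rw [h]; exact ⟨ht₀, hgt₀⟩⟩⟩
      exact hm.injOn (Ioo_subset_Icc_self htI) (Ioo_subset_Icc_self ht₀)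
        (by rw [hgt, hgt₀])
  · rw [if_neg hc]
    have : {t | t ∈ Ioo a b ∧ g t = r} = ∅ := by
      rw [Set.eq_empty_iff_forall_notMem]
      rintro t ⟨htI, hgt⟩
      push_neg at hc
      rcases hmono with hm | hm
      · have h1 : g a < g t := hm hamem (Ioo_subset_Icc_self htI) htI.1
        have h2 : g t < g b := hm (Ioo_subset_Icc_self htI) hbmem htI.2
        rw [hgt] at h1 h2
        exact absurd (hc.1 h1) (not_le.2 h2)
      · have h1 : g t < g a := hm hamem (Ioo_subset_Icc_self htI) htI.1
        have h2 : g b < g t := hm (Ioo_subset_Icc_self htI) hbmem htI.2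
        rw [hgt] at h1 h2
        exact absurd (hc.2 h2) (not_le.2 h1)
    rw [this, Set.ncard_empty]

lemma ncard_biUnion_eq (N : ℕ) (S : ℕ → Set ℝ)
    (hfin : ∀ k < N, (S k).Finite)
    (hdisj : ∀ k < N, ∀ l < N, k ≠ l → Disjoint (S k) (S l)) :
    (⋃ k ∈ Finset.range N, S k).ncard = ∑ k ∈ Finset.range N, (S k).ncard := by
  induction N with
  | zero => simp
  | succ n ih =>
    have hU : (⋃ k ∈ Finset.range (n+1), S k) = (⋃ k ∈ Finset.range n, S k) ∪ S n := by
      rw [Finset.range_add_one]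
      simp [Set.biUnion_insert, Set.union_comm]
    have hfin' : (⋃ k ∈ Finset.range n, S k).Finite :=
      Set.Finite.biUnion (Finset.range n).finite_toSet
        (fun k hk => hfin k (by simp at hk; omega))
    have hdisj' : Disjoint (⋃ k ∈ Finset.range n, S k) (S n) := by
      rw [Set.disjoint_iUnion_left]
      intro k
      rw [Set.disjoint_iUnion_left]
      intro hk
      simp only [Finset.mem_coe, Finset.mem_range] at hk
      exact hdisj k (by omega) n (by omega) (by omega)
    rw [hU, Set.ncard_union_eq hdisj' hfin' (hfin n (by omega)), Finset.sum_range_succ,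
      ih (fun k hk => hfin k (by omega)) (fun k hk l hl hkl => hdisj k (by omega) l (by omega) hkl)]

end Helpers

section Aux

open Set Filter Topology Finset

set_option maxHeartbeats 2000000 in
lemma knot_counts (K : Set S3) (hK : IsKnot K) (m : KnotMorse K) (hn : 0 < m.n) :
    ∃ l h : ℕ → ℕ,
      (∀ k ≤ m.n, l k < h k ∧ h k ≤ m.n) ∧
      (∀ j : Fin m.n, m.cnt j = ∑ k ∈ Finset.range (m.n + 1),
          (if l k ≤ (j : ℕ) ∧ (j : ℕ) < h k then 1 else 0)) ∧
      (∀ i ≤ m.n,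
        ((∑ k ∈ Finset.range (m.n + 1), if l k = i then 1 else 0) = 2 ∧
         (∑ k ∈ Finset.range (m.n + 1), if h k = i then 1 else 0) = 0) ∨
        ((∑ k ∈ Finset.range (m.n + 1), if l k = i then 1 else 0) = 0 ∧
         (∑ k ∈ Finset.range (m.n + 1), if h k = i then 1 else 0) = 2)) := by
  classical
  obtain ⟨e⟩ := hK
  have hcont : Continuous m.h := m.smooth_twoCrit.1.continuous
  have two_pi_pos : (0:ℝ) < 2 * Real.pi := by positivity
  -- the critical points
  set x : Fin (m.n + 1) → S3 := fun i => (m.crit_exists i).choose with hxdef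
  have hx : ∀ i, x i ∈ K ∧ IsLocalExtrOn m.h K (x i) ∧ m.h (x i) = m.c i :=
    fun i => (m.crit_exists i).choose_spec.1
  have hxu : ∀ i, ∀ y, y ∈ K ∧ IsLocalExtrOn m.h K y ∧ m.h y = m.c i → y = x i :=
    fun i => (m.crit_exists i).choose_spec.2
  -- parametrization of the knot
  set q : ℝ → ↥K := fun t => e.symm (Circle.exp t) with hqdef
  set ψ : ℝ → S3 := fun t => (q t : S3) with hψdef
  set G : ℝ → ℝ := fun t => m.h (ψ t) with hGdef
  have hqcont : Continuous q := e.symm.continuous.comp Circle.exp.continuous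
  have hψcont : Continuous ψ := continuous_subtype_val.comp hqcont
  have hGcont : Continuous G := hcont.comp hψcont
  have hψK : ∀ t, ψ t ∈ K := fun t => (q t).2
  have hper : Function.Periodic ψ (2 * Real.pi) := by
    intro t
    simp only [hψdef, hqdef, Circle.periodic_exp t]
  have hGper : Function.Periodic G (2 * Real.pi) := fun t => congrArg m.h (hper t)
  have hinj : ∀ {s t : ℝ}, ψ s = ψ t → ∃ kz : ℤ, s = t + kz * (2 * Real.pi) := by
    intro s t hst
    have h1 : q s = q t := Subtype.ext hst
    have h2 : Circle.exp s = Circle.exp t := e.symm.injective h1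
    exact Circle.exp_eq_exp.1 h2
  have hIcoInj : ∀ {θ s t : ℝ}, s ∈ Ico θ (θ + 2 * Real.pi) →
      t ∈ Ico θ (θ + 2 * Real.pi) → ψ s = ψ t → s = t := by
    intro θ s t hs ht hst
    obtain ⟨kz, hkz⟩ := hinj hst
    have hb1 : s - t < 2 * Real.pi := by
      have := hs.2; have := ht.1; simp only [Set.mem_Ico] at *; linarith
    have hb2 : -(2 * Real.pi) < s - t := by
      have := hs.1; have := ht.2; simp only [Set.mem_Ico] at *; linarith
    have hzero : kz = 0 := by
      by_contra hne
      rcases lt_or_gt_of_ne hne with hlt | hgt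
      · have : (kz : ℝ) ≤ -1 := by exact_mod_cast (by omega : kz ≤ -1)
        nlinarith
      · have : (1:ℝ) ≤ (kz : ℝ) := by exact_mod_cast hgt
        nlinarith
    rw [hzero] at hkz; push_cast at hkz; linarith
  have hsurj : ∀ y ∈ K, ∃ t, ψ t = y := by
    intro y hy
    refine ⟨Complex.arg ((e ⟨y, hy⟩ : Circle) : ℂ), ?_⟩
    show ((e.symm (Circle.exp (Complex.arg ((e ⟨y, hy⟩ : Circle) : ℂ)))) : S3) = y
    rw [Circle.exp_arg, Homeomorph.symm_apply_apply]
  -- transfer of extrema through the parametrization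
  have hopen : IsOpenMap q := by
    have h1 : IsOpenMap (e.symm : Circle → ↥K) := e.symm.isOpenMap
    have h2 : IsOpenMap (Circle.exp : ℝ → Circle) := isLocalHomeomorph_circleExp.isOpenMap
    exact h1.comp h2
  have hnhds : ∀ t, Filter.map ψ (𝓝 t) = 𝓝[K] (ψ t) := by
    intro t
    have h1 : Filter.map q (𝓝 t) = 𝓝 (q t) :=
      le_antisymm hqcont.continuousAt (hopen.nhds_le t)
    have h2 : Filter.map ψ (𝓝 t) = Filter.map Subtype.val (Filter.map q (𝓝 t)) := by
      rw [Filter.map_map]; rfl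
    rw [h2, h1, map_nhds_subtype_val]
  have hextr : ∀ t, IsLocalExtrOn m.h K (ψ t) ↔ IsLocalExtr G t := by
    intro t
    unfold IsLocalExtrOn IsLocalExtr IsExtrFilter IsMinFilter IsMaxFilter
    rw [← hnhds t]
    simp only [Filter.eventually_map]
    exact Iff.rfl
  have hmaxtr : ∀ t, IsLocalMaxOn m.h K (ψ t) → IsLocalMax G t := by
    intro t ht
    unfold IsLocalMaxOn IsMaxFilter at ht
    rw [← hnhds t] at ht
    exact ht
  have hmintr : ∀ t, IsLocalMinOn m.h K (ψ t) → IsLocalMin G t := by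
    intro t ht
    unfold IsLocalMinOn IsMinFilter at ht
    rw [← hnhds t] at ht
    exact ht
  -- positions of the critical points
  set θ : ℝ := Classical.choose (hsurj (x 0) (hx 0).1) with hθdef
  have hθ : ψ θ = x 0 := Classical.choose_spec (hsurj (x 0) (hx 0).1)
  set pos : Fin (m.n + 1) → ℝ :=
    fun i => toIcoMod two_pi_pos θ (Classical.choose (hsurj (x i) (hx i).1)) with hposdef
  have hψpos : ∀ i, ψ (pos i) = x i := by
    intro i
    have hsp : ψ (Classical.choose (hsurj (x i) (hx i).1)) = x i :=
      Classical.choose_spec (hsurj (x i) (hx i).1)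
    rw [← hsp]
    simp only [hposdef]
    rw [toIcoMod]
    exact hper.sub_zsmul_eq _
  have hposmem : ∀ i, pos i ∈ Ico θ (θ + 2 * Real.pi) := fun i => toIcoMod_mem_Ico _ _ _
  have hθmem : θ ∈ Ico θ (θ + 2 * Real.pi) := ⟨le_refl _, by linarith⟩
  have hpos0 : pos 0 = θ := hIcoInj (hposmem 0) hθmem (by rw [hψpos 0, hθ])
  have hposinj : Function.Injective pos := by
    intro i j hij
    have : x i = x j := by rw [← hψpos i, ← hψpos j, hij]
    have hc : m.c i = m.c j := by rw [← (hx i).2.2, ← (hx j).2.2, this]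
    exact m.c_mono.injective hc
  -- the sorted positions
  set Tfin : Finset ℝ := Finset.image pos Finset.univ with hTdef
  have hcard : Tfin.card = m.n + 1 := by
    rw [hTdef, Finset.card_image_of_injective _ hposinj, Finset.card_univ, Fintype.card_fin]
  set oi := Tfin.orderIsoOfFin hcard with hoidef
  set τ : ℕ → ℝ := fun k => if hk : k < m.n + 1 then (oi ⟨k, hk⟩ : ℝ) else θ + 2 * Real.pi
    with hτdef
  have hτmem : ∀ k, k < m.n + 1 → τ k ∈ Tfin := by
    intro k hk
    simp only [hτdef, dif_pos hk]
    exact (oi ⟨k, hk⟩).2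
  have hτpos : ∀ k, k < m.n + 1 → ∃ i, pos i = τ k := by
    intro k hk
    have := hτmem k hk
    rw [hTdef, Finset.mem_image] at this
    obtain ⟨i, -, hi⟩ := this
    exact ⟨i, hi⟩
  have hτIco : ∀ k, k < m.n + 1 → τ k ∈ Ico θ (θ + 2 * Real.pi) := by
    intro k hk
    obtain ⟨i, hi⟩ := hτpos k hk
    rw [← hi]; exact hposmem i
  have hτtop : τ (m.n + 1) = θ + 2 * Real.pi := by
    simp only [hτdef, dif_neg (lt_irrefl (m.n + 1))]
  have hτmono : ∀ {k k' : ℕ}, k < k' → k' ≤ m.n + 1 → τ k < τ k' := by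
    intro k k' hkk' hk'
    rcases Nat.eq_or_lt_of_le hk' with rfl | hk'lt
    · rw [hτtop]
      exact (hτIco k (by omega)).2
    · have hk : k < m.n + 1 := by omega
      have : oi ⟨k, hk⟩ < oi ⟨k', hk'lt⟩ := by
        rw [OrderIso.lt_iff_lt]
        exact hkk'
      simp only [hτdef, dif_pos hk, dif_pos hk'lt]
      exact_mod_cast this
  have hτlt : ∀ {k k' : ℕ}, k ≤ m.n + 1 → k' ≤ m.n + 1 → τ k < τ k' → k < k' := by
    intro k k' hk hk' hττ
    by_contra hle
    push_neg at hle
    rcases Nat.eq_or_lt_of_le hle with rfl | hlt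
    · exact lt_irrefl _ hττ
    · exact absurd (hτmono hlt hk) (by linarith)
  have hθT : θ ∈ Tfin := by
    rw [hTdef, Finset.mem_image]
    exact ⟨0, Finset.mem_univ _, hpos0⟩
  have hτ0 : τ 0 = θ := by
    have h1 : θ ≤ τ 0 := by
      obtain ⟨i, hi⟩ := hτpos 0 (by omega)
      rw [← hi]; exact (hposmem i).1
    have h2 : τ 0 ≤ θ := by
      set jj := oi.symm ⟨θ, hθT⟩ with hjj
      have : oi jj = ⟨θ, hθT⟩ := OrderIso.apply_symm_apply _ _
      have h3 : τ (jj : ℕ) = θ := by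
        simp only [hτdef, dif_pos jj.2]
        rw [Fin.eta, this]
      rcases Nat.eq_zero_or_pos (jj : ℕ) with hz | hz
      · rw [← h3, hz]
      · rw [← h3]
        exact (hτmono hz jj.2.le).le
    linarith
  -- the index function
  set a : ℕ → Fin (m.n + 1) := fun k =>
    if hk : k < m.n + 1 then (hτpos k hk).choose else 0 with hadef
  have hapos : ∀ k (hk : k < m.n + 1), pos (a k) = τ k := by
    intro k hk
    simp only [hadef, dif_pos hk]
    exact (hτpos k hk).choose_spec
  have hatop : a (m.n + 1) = 0 := by simp only [hadef, dif_neg (lt_irrefl (m.n + 1))]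
  have hψτ : ∀ k, k ≤ m.n + 1 → ψ (τ k) = x (a k) := by
    intro k hk
    rcases Nat.eq_or_lt_of_le hk with rfl | hklt
    · rw [hτtop, hatop, hper θ, hθ]
    · rw [← hapos k hklt, hψpos]
  have haGτ : ∀ k, k ≤ m.n + 1 → G (τ k) = m.c (a k) := by
    intro k hk
    show m.h (ψ (τ k)) = m.c (a k)
    rw [hψτ k hk, (hx (a k)).2.2]
  have hainj : ∀ {k k' : ℕ}, k < m.n + 1 → k' < m.n + 1 → a k = a k' → k = k' := by
    intro k k' hk hk' haa
    have hττ : τ k = τ k' := by rw [← hapos k hk, ← hapos k' hk', haa]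
    rcases Nat.lt_trichotomy k k' with h | h | h
    · exact absurd (hτmono h hk'.le) (by rw [hττ]; exact lt_irrefl _)
    · exact h
    · exact absurd (hτmono h hk.le) (by rw [hττ]; exact lt_irrefl _)
  have ha0 : a 0 = 0 := by
    apply hposinj
    rw [hapos 0 (by omega), hτ0, hpos0]
  have hasurj : ∀ i : Fin (m.n + 1), ∃ k, k < m.n + 1 ∧ a k = i := by
    intro i
    have hpT : pos i ∈ Tfin := by
      rw [hTdef, Finset.mem_image]; exact ⟨i, Finset.mem_univ _, rfl⟩
    set jj := oi.symm ⟨pos i, hpT⟩ with hjj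
    have hoi : oi jj = ⟨pos i, hpT⟩ := OrderIso.apply_symm_apply _ _
    have hτjj : τ (jj : ℕ) = pos i := by
      simp only [hτdef, dif_pos jj.2]
      rw [Fin.eta, hoi]
    refine ⟨(jj : ℕ), jj.2, hposinj ?_⟩
    rw [hapos _ jj.2, hτjj]
  have hIooIco : ∀ k, k < m.n + 1 → Ioo (τ k) (τ (k+1)) ⊆ Ico θ (θ + 2 * Real.pi) := by
    intro k hk t htIoo
    have h0k : τ 0 ≤ τ k := by
      rcases Nat.eq_zero_or_pos k with rfl | hpos'
      · exact le_refl _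
      · exact (hτmono hpos' hk.le).le
    have hktop : τ (k+1) ≤ τ (m.n + 1) := by
      rcases Nat.eq_or_lt_of_le (by omega : k + 1 ≤ m.n + 1) with heq | hlt
      · rw [heq]
      · exact (hτmono hlt (le_refl _)).le
    constructor
    · rw [← hτ0]; exact h0k.trans htIoo.1.le
    · rw [← hτtop]; exact htIoo.2.trans_le hktop
  have hnoext : ∀ t ∈ Ico θ (θ + 2 * Real.pi), IsLocalExtr G t → ∃ k, k < m.n + 1 ∧ t = τ k := by
    intro t ht hext
    have hOn : IsLocalExtrOn m.h K (ψ t) := (hextr t).2 hext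
    obtain ⟨i, hi⟩ := m.crit_complete (ψ t) (hψK t) hOn
    have hxi : ψ t = x i := hxu i (ψ t) ⟨hψK t, hOn, hi⟩
    have ht' : t = pos i := hIcoInj ht (hposmem i) (by rw [hxi, hψpos])
    obtain ⟨k, hk, hak⟩ := hasurj i
    exact ⟨k, hk, by rw [ht', ← hak, hapos k hk]⟩
  have hττ1 : ∀ k, k < m.n + 1 → τ k < τ (k+1) := fun k hk => hτmono (by omega) (by omega)
  have hmonoarc : ∀ k, k < m.n + 1 →
      StrictMonoOn G (Icc (τ k) (τ (k+1))) ∨ StrictAntiOn G (Icc (τ k) (τ (k+1))) := by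
    intro k hk
    apply noextr_mono hGcont (hττ1 k hk)
    intro t htIoo hext
    obtain ⟨k', hk', rfl⟩ := hnoext t (hIooIco k hk htIoo) hext
    have h1 : k < k' := hτlt hk.le hk'.le htIoo.1
    have h2 : k' < k + 1 := hτlt hk'.le (by omega) htIoo.2
    omega
  -- the low/high endpoint index functions
  refine ⟨fun k => min ((a k : ℕ)) ((a (k+1) : ℕ)), fun k => max ((a k : ℕ)) ((a (k+1) : ℕ)),
    ?_, ?_, ?_⟩
  · -- bounds
    intro k hk
    beta_reduce
    have hmax : max ((a k : ℕ)) ((a (k+1) : ℕ)) ≤ m.n := by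
      have h1 : (a k : ℕ) ≤ m.n := Fin.is_le _
      have h2 : (a (k+1) : ℕ) ≤ m.n := Fin.is_le _
      omega
    have hne' : (a k : ℕ) ≠ (a (k+1) : ℕ) := by
      intro hcon
      have hcon' : a k = a (k+1) := Fin.val_injective hcon
      rcases Nat.eq_or_lt_of_le hk with heq | hklt
      · rw [heq, hatop] at hcon'
        exact absurd (hainj (by omega) (by omega) (hcon'.trans ha0.symm)) (by omega)
      · exact absurd (hainj (by omega) (by omega) hcon') (by omega)
    refine ⟨?_, hmax⟩
    beta_reduce
    omega
  · -- the count formula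
    intro j
    beta_reduce
    set r := m.midpt j with hrdef
    have hcs : m.c (Fin.castSucc j) < m.c (Fin.succ j) := m.c_mono Fin.castSucc_lt_succ
    have hrmid : m.c (Fin.castSucc j) < r ∧ r < m.c (Fin.succ j) := by
      constructor <;> (simp only [hrdef, KnotMorse.midpt]; linarith)
    have hlow : ∀ i : Fin (m.n + 1), m.c i < r ↔ (i : ℕ) ≤ (j : ℕ) := by
      intro i
      constructor
      · intro h
        by_contra hgt
        push_neg at hgt
        have hle : Fin.succ j ≤ i := by
          rw [Fin.le_def]
          simpa using hgt
        have := m.c_mono.le_iff_le.2 hle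
        linarith [hrmid.2]
      · intro h
        have hle : i ≤ Fin.castSucc j := by
          rw [Fin.le_def]
          simpa using h
        have := m.c_mono.le_iff_le.2 hle
        linarith [hrmid.1]
    have hhigh : ∀ i : Fin (m.n + 1), r < m.c i ↔ (j : ℕ) < (i : ℕ) := by
      intro i
      constructor
      · intro h
        by_contra hgt
        push_neg at hgt
        have hlt : m.c i < r := (hlow i).2 hgt
        linarith
      · intro h
        have hle : Fin.succ j ≤ i := by rw [Fin.le_def]; simpa using h
        have := m.c_mono.le_iff_le.2 hle
        linarith [hrmid.2]
    have hcne : ∀ i : Fin (m.n + 1), m.c i ≠ r := by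
      intro i hcon
      rcases le_or_gt (i : ℕ) (j : ℕ) with h | h
      · have := (hlow i).2 h; linarith [this, hcon.le]
      · have := (hhigh i).2 h; linarith [this, hcon.ge]
    set L : Set ℝ := {t | t ∈ Ico θ (θ + 2 * Real.pi) ∧ G t = r} with hLdef
    set Sk : ℕ → Set ℝ := fun k => {t | t ∈ Ioo (τ k) (τ (k+1)) ∧ G t = r} with hSkdef
    have hLK : K ∩ m.h ⁻¹' {r} = ψ '' L := by
      ext y
      constructor
      · rintro ⟨hyK, hyr⟩
        simp only [Set.mem_preimage, Set.mem_singleton_iff] at hyr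
        obtain ⟨t, ht⟩ := hsurj y hyK
        have htico := toIcoMod_mem_Ico two_pi_pos θ t
        have hψt : ψ (toIcoMod two_pi_pos θ t) = ψ t := by
          have hmod : toIcoMod two_pi_pos θ t = t - toIcoDiv two_pi_pos θ t • (2 * Real.pi) := by
            have := self_sub_toIcoMod two_pi_pos θ t
            linarith [this]
          rw [hmod]
          exact hper.sub_zsmul_eq _
        refine ⟨toIcoMod two_pi_pos θ t, ⟨htico, ?_⟩, by rw [hψt, ht]⟩
        show m.h (ψ _) = r
        rw [hψt, ht, hyr]
      · rintro ⟨t, ⟨htIco, htG⟩, rfl⟩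
        exact ⟨hψK t, by simp only [Set.mem_preimage, Set.mem_singleton_iff]; exact htG⟩
    have hinjL : Set.InjOn ψ L := fun s hs t ht hst => hIcoInj hs.1 ht.1 hst
    have hcnt_ncard : m.cnt j = L.ncard := by
      rw [KnotMorse.cnt, ← hrdef, hLK, Set.ncard_image_of_injOn hinjL]
    have hdecomp : L = ⋃ k ∈ Finset.range (m.n + 1), Sk k := by
      ext t
      simp only [Set.mem_iUnion, Finset.mem_range, exists_prop]
      constructor
      · rintro ⟨htIco, htG⟩
        set F := (Finset.range (m.n + 1)).filter (fun k => τ k ≤ t) with hFdef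
        have hF0 : 0 ∈ F := by
          rw [hFdef, Finset.mem_filter, Finset.mem_range]
          exact ⟨by omega, by rw [hτ0]; exact htIco.1⟩
        set k := F.max' ⟨0, hF0⟩ with hkdef
        have hkF : k ∈ F := F.max'_mem _
        rw [hFdef, Finset.mem_filter, Finset.mem_range] at hkF
        have hub : t < τ (k + 1) := by
          rcases Nat.eq_or_lt_of_le (by omega : k + 1 ≤ m.n + 1) with heq | hlt
          · rw [heq, hτtop]; exact htIco.2
          · by_contra hcon
            push_neg at hcon
            have : k + 1 ∈ F := by
              rw [hFdef, Finset.mem_filter, Finset.mem_range]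
              exact ⟨hlt, hcon⟩
            have := F.le_max' _ this
            omega
        have hne_t : τ k ≠ t := by
          intro heq
          apply hcne (a k)
          rw [← haGτ k hkF.1.le, heq, htG]
        exact ⟨k, hkF.1, ⟨lt_of_le_of_ne hkF.2 hne_t, hub⟩, htG⟩
      · rintro ⟨k, hk, htIoo, htG⟩
        exact ⟨hIooIco k hk htIoo, htG⟩
    have hfinSk : ∀ k, k < m.n + 1 → (Sk k).Finite := by
      intro k hk
      apply Set.Subsingleton.finite
      intro s hs t ht
      rcases hmonoarc k hk with hm | hm
      · exact hm.injOn (Ioo_subset_Icc_self hs.1) (Ioo_subset_Icc_self ht.1)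
          (by rw [hs.2, ht.2])
      · exact hm.injOn (Ioo_subset_Icc_self hs.1) (Ioo_subset_Icc_self ht.1)
          (by rw [hs.2, ht.2])
    have hdisjSk : ∀ k, k < m.n + 1 → ∀ k', k' < m.n + 1 → k ≠ k' →
        Disjoint (Sk k) (Sk k') := by
      have key : ∀ k k', k < k' → k' < m.n + 1 → ∀ t, t ∈ Sk k → t ∈ Sk k' → False := by
        intro k k' hkk' hk' t ht ht'
        have h1 : τ (k+1) ≤ τ k' := by
          rcases Nat.eq_or_lt_of_le (by omega : k + 1 ≤ k') with heq | hlt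
          · rw [heq]
          · exact (hτmono hlt (by omega)).le
        have := ht.1.2
        have := ht'.1.1
        linarith
      intro k hk k' hk' hne'
      rw [Set.disjoint_left]
      intro t ht ht'
      rcases Nat.lt_trichotomy k k' with h | h | h
      · exact key k k' h hk' t ht ht'
      · exact hne' h
      · exact key k' k h hk t ht' ht
    have hcount : L.ncard = ∑ k ∈ Finset.range (m.n + 1), (Sk k).ncard := by
      rw [hdecomp]
      exact ncard_biUnion_eq _ _ hfinSk hdisjSk
    rw [hcnt_ncard, hcount]
    apply Finset.sum_congr rfl
    intro k hk'
    rw [Finset.mem_range] at hk'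
    have harc := arc_count (r := r) hGcont (hττ1 k hk') (hmonoarc k hk')
    have hGk : G (τ k) = m.c (a k) := haGτ k hk'.le
    have hGk1 : G (τ (k+1)) = m.c (a (k+1)) := haGτ (k+1) (by omega)
    have hiff : ((G (τ k) < r ∧ r < G (τ (k+1))) ∨ (G (τ (k+1)) < r ∧ r < G (τ k))) ↔
        (min ((a k : ℕ)) ((a (k+1) : ℕ)) ≤ (j : ℕ) ∧
          (j : ℕ) < max ((a k : ℕ)) ((a (k+1) : ℕ))) := by
      rw [hGk, hGk1, hlow (a k), hlow (a (k+1)), hhigh (a k), hhigh (a (k+1))]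
      omega
    beta_reduce
    rw [show Sk k = {t | t ∈ Ioo (τ k) (τ (k+1)) ∧ G t = r} from rfl]
    rw [harc, if_congr hiff rfl rfl]
  · -- the pairing property
    intro i hi
    beta_reduce
    set I : Fin (m.n + 1) := ⟨i, by omega⟩ with hIdef
    obtain ⟨kr, hkr, hakr⟩ := hasurj I
    set kl := if kr = 0 then m.n else kr - 1 with hkldef
    have hkl : kl ≤ m.n := by
      rw [hkldef]; split <;> omega
    have hklne : kl ≠ kr := by
      rw [hkldef]; split
      · omega
      · omega
    have hkl1 : a (kl + 1) = I := by
      rw [hkldef]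
      split
      · next h0 =>
        rw [hatop, ← hakr, h0, ha0]
      · next h0 =>
        rw [Nat.sub_add_cancel (by omega)]
        exact hakr
    have huniqL : ∀ k, k < m.n + 1 → a k = I → k = kr := fun k hk h =>
      hainj hk hkr (h.trans hakr.symm)
    have huniqR : ∀ k, k ≤ m.n → a (k+1) = I → k = kl := by
      intro k hk h
      by_cases hkn : k = m.n
      · subst hkn
        have hI0 : I = 0 := by rw [← h, hatop]
        have hkr0 : kr = 0 := (huniqL 0 (by omega) (by rw [ha0, hI0])).symm
        rw [hkldef, if_pos hkr0]
      · have hkr' : k + 1 = kr := huniqL (k+1) (by omega) h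
        rw [hkldef, if_neg (by omega), ← hkr']
        omega
    -- slope lemmas
    have slopeMinL : ∀ k, k < m.n + 1 → IsLocalMin G (τ k) → m.c (a k) < m.c (a (k+1)) := by
      intro k hk hmin
      rcases hmonoarc k hk with hm | hm
      · have := hm (left_mem_Icc.2 (hττ1 k hk).le) (right_mem_Icc.2 (hττ1 k hk).le)
          (hττ1 k hk)
        rwa [haGτ k hk.le, haGτ (k+1) (by omega)] at this
      · exfalso
        have hev : ∀ᶠ s in 𝓝[>] (τ k), G (τ k) ≤ G s := hmin.filter_mono nhdsWithin_le_nhds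
        have hIoo : Ioo (τ k) (τ (k+1)) ∈ 𝓝[>] (τ k) :=
          Ioo_mem_nhdsGT_of_mem ⟨le_refl _, hττ1 k hk⟩
        obtain ⟨s, hs1, hs2⟩ := (hev.and (eventually_mem_set.2 hIoo)).exists
        have : G s < G (τ k) := hm (left_mem_Icc.2 (hττ1 k hk).le)
          (Ioo_subset_Icc_self hs2) hs2.1
        linarith
    have slopeMaxL : ∀ k, k < m.n + 1 → IsLocalMax G (τ k) → m.c (a (k+1)) < m.c (a k) := by
      intro k hk hmax
      rcases hmonoarc k hk with hm | hm
      · exfalso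
        have hev : ∀ᶠ s in 𝓝[>] (τ k), G s ≤ G (τ k) := hmax.filter_mono nhdsWithin_le_nhds
        have hIoo : Ioo (τ k) (τ (k+1)) ∈ 𝓝[>] (τ k) :=
          Ioo_mem_nhdsGT_of_mem ⟨le_refl _, hττ1 k hk⟩
        obtain ⟨s, hs1, hs2⟩ := (hev.and (eventually_mem_set.2 hIoo)).exists
        have : G (τ k) < G s := hm (left_mem_Icc.2 (hττ1 k hk).le)
          (Ioo_subset_Icc_self hs2) hs2.1
        linarith
      · have := hm (left_mem_Icc.2 (hττ1 k hk).le) (right_mem_Icc.2 (hττ1 k hk).le)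
          (hττ1 k hk)
        rwa [haGτ k hk.le, haGτ (k+1) (by omega)] at this
    have slopeMinR : ∀ k, k < m.n + 1 → IsLocalMin G (τ (k+1)) →
        m.c (a (k+1)) < m.c (a k) := by
      intro k hk hmin
      rcases hmonoarc k hk with hm | hm
      · exfalso
        have hev : ∀ᶠ s in 𝓝[<] (τ (k+1)), G (τ (k+1)) ≤ G s :=
          hmin.filter_mono nhdsWithin_le_nhds
        have hIoo : Ioo (τ k) (τ (k+1)) ∈ 𝓝[<] (τ (k+1)) :=
          Ioo_mem_nhdsLT_of_mem ⟨hττ1 k hk, le_refl _⟩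
        obtain ⟨s, hs1, hs2⟩ := (hev.and (eventually_mem_set.2 hIoo)).exists
        have : G s < G (τ (k+1)) := hm (Ioo_subset_Icc_self hs2)
          (right_mem_Icc.2 (hττ1 k hk).le) hs2.2
        linarith
      · have := hm (left_mem_Icc.2 (hττ1 k hk).le) (right_mem_Icc.2 (hττ1 k hk).le)
          (hττ1 k hk)
        rwa [haGτ k hk.le, haGτ (k+1) (by omega)] at this
    have slopeMaxR : ∀ k, k < m.n + 1 → IsLocalMax G (τ (k+1)) →
        m.c (a k) < m.c (a (k+1)) := by
      intro k hk hmax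
      rcases hmonoarc k hk with hm | hm
      · have := hm (left_mem_Icc.2 (hττ1 k hk).le) (right_mem_Icc.2 (hττ1 k hk).le)
          (hττ1 k hk)
        rwa [haGτ k hk.le, haGτ (k+1) (by omega)] at this
      · exfalso
        have hev : ∀ᶠ s in 𝓝[<] (τ (k+1)), G s ≤ G (τ (k+1)) :=
          hmax.filter_mono nhdsWithin_le_nhds
        have hIoo : Ioo (τ k) (τ (k+1)) ∈ 𝓝[<] (τ (k+1)) :=
          Ioo_mem_nhdsLT_of_mem ⟨hττ1 k hk, le_refl _⟩
        obtain ⟨s, hs1, hs2⟩ := (hev.and (eventually_mem_set.2 hIoo)).exists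
        have : G (τ (k+1)) < G s := hm (Ioo_subset_Icc_self hs2)
          (right_mem_Icc.2 (hττ1 k hk).le) hs2.2
        linarith
    have hψkr : ψ (τ kr) = x I := by rw [hψτ kr hkr.le, hakr]
    have hψkl1 : ψ (τ (kl + 1)) = x I := by rw [hψτ (kl + 1) (by omega), hkl1]
    have hIlt : ∀ i' : Fin (m.n + 1), m.c I < m.c i' ↔ (i : ℕ) < (i' : ℕ) := by
      intro i'
      rw [m.c_mono.lt_iff_lt, Fin.lt_def]
    have hIgt : ∀ i' : Fin (m.n + 1), m.c i' < m.c I ↔ (i' : ℕ) < (i : ℕ) := by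
      intro i'
      rw [m.c_mono.lt_iff_lt, Fin.lt_def]
    have hIval : (I : ℕ) = i := rfl
    rcases (hx I).2.1 with hminOn | hmaxOn
    · -- local minimum: i is the low endpoint of both adjacent arcs
      left
      have hminkr : IsLocalMin G (τ kr) := hmintr _ (by rw [hψkr]; exact hminOn)
      have hminkl : IsLocalMin G (τ (kl + 1)) := hmintr _ (by rw [hψkl1]; exact hminOn)
      have hR : (i : ℕ) < (a (kr + 1) : ℕ) := by
        have := slopeMinL kr hkr hminkr
        rw [hakr] at this
        exact (hIlt _).1 this
      have hL : (i : ℕ) < (a kl : ℕ) := by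
        have := slopeMinR kl (by omega) hminkl
        rw [hkl1] at this
        exact (hIlt _).1 this
      have hlkr : min ((a kr : ℕ)) ((a (kr+1) : ℕ)) = i := by
        rw [hakr, hIval]; omega
      have hlkl : min ((a kl : ℕ)) ((a (kl+1) : ℕ)) = i := by
        rw [hkl1, hIval]; omega
      have hlk_iff : ∀ k, k < m.n + 1 →
          ((min ((a k : ℕ)) ((a (k+1) : ℕ)) = i) ↔ (k = kl ∨ k = kr)) := by
        intro k hk
        constructor
        · intro hmin'
          have : (a k : ℕ) = i ∨ (a (k+1) : ℕ) = i := by omega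
          rcases this with h | h
          · exact Or.inr (huniqL k hk (Fin.val_injective (by rw [h, hIval])))
          · exact Or.inl (huniqR k (by omega) (Fin.val_injective (by rw [h, hIval])))
        · rintro (rfl | rfl)
          · exact hlkl
          · exact hlkr
      constructor
      · calc (∑ k ∈ Finset.range (m.n + 1), if min ((a k : ℕ)) ((a (k+1) : ℕ)) = i then 1 else 0)
            = ∑ k ∈ Finset.range (m.n + 1),
              ((if k = kl then 1 else 0) + (if k = kr then 1 else 0)) := by
              apply Finset.sum_congr rfl
              intro k hk
              rw [Finset.mem_range] at hk
              rw [if_congr (hlk_iff k hk) rfl rfl]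
              by_cases h1 : k = kl
              · rw [if_pos (Or.inl h1), if_pos h1, if_neg (by omega)]
              · by_cases h2 : k = kr
                · rw [if_pos (Or.inr h2), if_neg h1, if_pos h2]
                · rw [if_neg (by tauto), if_neg h1, if_neg h2]
          _ = 2 := by
              rw [Finset.sum_add_distrib, Finset.sum_ite_eq' (Finset.range (m.n+1)) kl
                (fun _ => 1), Finset.sum_ite_eq' (Finset.range (m.n+1)) kr (fun _ => 1),
                if_pos (Finset.mem_range.2 (by omega)), if_pos (Finset.mem_range.2 (by omega))]
      · apply Finset.sum_eq_zero
        intro k hk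
        rw [Finset.mem_range] at hk
        rw [if_neg]
        intro hmax'
        have : (a k : ℕ) = i ∨ (a (k+1) : ℕ) = i := by omega
        rcases this with h | h
        · have hk' : k = kr := huniqL k hk (Fin.val_injective (by rw [h, hIval]))
          subst hk'
          rw [hakr, hIval] at hmax'
          omega
        · have hk' : k = kl := huniqR k (by omega) (Fin.val_injective (by rw [h, hIval]))
          subst hk'
          rw [hkl1, hIval] at hmax'
          omega
    · -- local maximum: i is the high endpoint of both adjacent arcs
      right
      have hmaxkr : IsLocalMax G (τ kr) := hmaxtr _ (by rw [hψkr]; exact hmaxOn)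
      have hmaxkl : IsLocalMax G (τ (kl + 1)) := hmaxtr _ (by rw [hψkl1]; exact hmaxOn)
      have hR : (a (kr + 1) : ℕ) < (i : ℕ) := by
        have := slopeMaxL kr hkr hmaxkr
        rw [hakr] at this
        exact (hIgt _).1 this
      have hL : (a kl : ℕ) < (i : ℕ) := by
        have := slopeMaxR kl (by omega) hmaxkl
        rw [hkl1] at this
        exact (hIgt _).1 this
      have hhkr : max ((a kr : ℕ)) ((a (kr+1) : ℕ)) = i := by
        rw [hakr, hIval]; omega
      have hhkl : max ((a kl : ℕ)) ((a (kl+1) : ℕ)) = i := by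
        rw [hkl1, hIval]; omega
      have hhk_iff : ∀ k, k < m.n + 1 →
          ((max ((a k : ℕ)) ((a (k+1) : ℕ)) = i) ↔ (k = kl ∨ k = kr)) := by
        intro k hk
        constructor
        · intro hmax'
          have : (a k : ℕ) = i ∨ (a (k+1) : ℕ) = i := by omega
          rcases this with h | h
          · exact Or.inr (huniqL k hk (Fin.val_injective (by rw [h, hIval])))
          · exact Or.inl (huniqR k (by omega) (Fin.val_injective (by rw [h, hIval])))
        · rintro (rfl | rfl)
          · exact hhkl
          · exact hhkr
      constructor
      · apply Finset.sum_eq_zero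
        intro k hk
        rw [Finset.mem_range] at hk
        rw [if_neg]
        intro hmin'
        have : (a k : ℕ) = i ∨ (a (k+1) : ℕ) = i := by omega
        rcases this with h | h
        · have hk' : k = kr := huniqL k hk (Fin.val_injective (by rw [h, hIval]))
          subst hk'
          rw [hakr, hIval] at hmin'
          omega
        · have hk' : k = kl := huniqR k (by omega) (Fin.val_injective (by rw [h, hIval]))
          subst hk'
          rw [hkl1, hIval] at hmin'
          omega
      · calc (∑ k ∈ Finset.range (m.n + 1), if max ((a k : ℕ)) ((a (k+1) : ℕ)) = i then 1 else 0)
            = ∑ k ∈ Finset.range (m.n + 1),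
              ((if k = kl then 1 else 0) + (if k = kr then 1 else 0)) := by
              apply Finset.sum_congr rfl
              intro k hk
              rw [Finset.mem_range] at hk
              rw [if_congr (hhk_iff k hk) rfl rfl]
              by_cases h1 : k = kl
              · rw [if_pos (Or.inl h1), if_pos h1, if_neg (by omega)]
              · by_cases h2 : k = kr
                · rw [if_pos (Or.inr h2), if_neg h1, if_pos h2]
                · rw [if_neg (by tauto), if_neg h1, if_neg h2]
          _ = 2 := by
              rw [Finset.sum_add_distrib, Finset.sum_ite_eq' (Finset.range (m.n+1)) kl
                (fun _ => 1), Finset.sum_ite_eq' (Finset.range (m.n+1)) kr (fun _ => 1),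
                if_pos (Finset.mem_range.2 (by omega)), if_pos (Finset.mem_range.2 (by omega))]


end Aux

set_option maxHeartbeats 2000000 in
/-- If `a₁, …, a_m` are the intersection numbers of `K` with the thick levels of
`h ∈ 𝓜(K)` and `b₁, …, b_{m-1}` those with the thin levels, then
`w(h) = ½ (Σ aᵢ² − Σ bᵢ²)`. -/
theorem width_eq_thick_thin_formula (K : Set S3) (hK : IsKnot K) (m : KnotMorse K) :
    (2 : ℤ) * m.width =
      (∑ i : Fin m.n, Set.indicator {i | m.ThickIdx i} (fun i => ((m.cnt i : ℤ)) ^ 2) i) -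
      (∑ i : Fin m.n, Set.indicator {i | m.ThinIdx i} (fun i => ((m.cnt i : ℤ)) ^ 2) i) := by
  classical
  rcases Nat.eq_zero_or_pos m.n with h0 | hn
  · haveI : IsEmpty (Fin m.n) := by rw [h0]; infer_instance
    simp [KnotMorse.width, Finset.univ_eq_empty]
  · obtain ⟨l, h, hb, hcnt, hpair⟩ := knot_counts K hK m hn
    set n := m.n with hndef
    set N : ℕ → ℕ := fun j => if hj : j < n then m.cnt ⟨j, hj⟩ else 0 with hNdef
    have hNval : ∀ (j) (hj : j < n), N j = m.cnt ⟨j, hj⟩ := fun j hj => dif_pos hj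
    have hNsum : ∀ (j : ℕ), j < n → N j = ∑ k ∈ Finset.range (n + 1),
        (if l k ≤ j ∧ j < h k then 1 else 0) := by
      intro j hj
      rw [hNval j hj, hcnt ⟨j, hj⟩]
    have hbk : ∀ k ∈ Finset.range (n+1), l k < h k ∧ h k ≤ n := by
      intro k hk
      exact hb k (Nat.lt_succ_iff.1 (Finset.mem_range.1 hk))
    have hN0 : N 0 = 2 := by
      rw [hNsum 0 hn]
      have hcongr : ∀ k ∈ Finset.range (n+1), (if l k ≤ 0 ∧ 0 < h k then (1:ℕ) else 0)
          = (if l k = 0 then 1 else 0) := by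
        intro k hk
        have := hbk k hk
        by_cases hlk : l k = 0
        · rw [if_pos hlk, if_pos ⟨by omega, by omega⟩]
        · rw [if_neg hlk, if_neg (by omega)]
      rw [Finset.sum_congr rfl hcongr]
      rcases hpair 0 (Nat.zero_le _) with ⟨h1, -⟩ | ⟨-, h2⟩
      · exact h1
      · exfalso
        by_cases hall : ∀ k ∈ Finset.range (n+1), h k ≠ 0
        · rw [Finset.sum_eq_zero (fun k hk => if_neg (hall k hk))] at h2; omega
        · push_neg at hall
          obtain ⟨k, hk, hk0⟩ := hall
          have := hbk k hk
          omega
    have hNl : N (n-1) = 2 := by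
      rw [hNsum (n-1) (by omega)]
      have hcongr : ∀ k ∈ Finset.range (n+1), (if l k ≤ n-1 ∧ n-1 < h k then (1:ℕ) else 0)
          = (if h k = n then 1 else 0) := by
        intro k hk
        have := hbk k hk
        by_cases hhk : h k = n
        · rw [if_pos hhk, if_pos ⟨by omega, by omega⟩]
        · rw [if_neg hhk, if_neg (by omega)]
      rw [Finset.sum_congr rfl hcongr]
      rcases hpair n (le_refl _) with ⟨h1, -⟩ | ⟨-, h2⟩
      · exfalso
        by_cases hall : ∀ k ∈ Finset.range (n+1), l k ≠ n
        · rw [Finset.sum_eq_zero (fun k hk => if_neg (hall k hk))] at h1; omega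
        · push_neg at hall
          obtain ⟨k, hk, hkn⟩ := hall
          have := hbk k hk
          omega
      · exact h2
    have hNstep : ∀ j, j + 1 < n → N (j+1) = N j + 2 ∨ N (j+1) + 2 = N j := by
      intro j hj
      have hkey : N (j+1) + (∑ k ∈ Finset.range (n+1), if h k = j+1 then 1 else 0)
          = N j + (∑ k ∈ Finset.range (n+1), if l k = j+1 then 1 else 0) := by
        rw [hNsum (j+1) hj, hNsum j (by omega), ← Finset.sum_add_distrib,
          ← Finset.sum_add_distrib]
        apply Finset.sum_congr rfl
        intro k hk
        have := hbk k hk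
        split_ifs <;> omega
      rcases hpair (j+1) (by omega) with ⟨h1, h2⟩ | ⟨h1, h2⟩
      · left; rw [h1, h2] at hkey; omega
      · right; rw [h1, h2] at hkey; omega
    set c : ℕ → ℤ := fun j => (N j : ℤ) with hcdef
    have hstepZ : ∀ j, j+1 < n → c (j+1) = c j + 2 ∨ c (j+1) = c j - 2 := by
      intro j hj
      rcases hNstep j hj with hs | hs
      · left; simp only [hcdef]; omega
      · right; simp only [hcdef]; omega
    have h0Z : c 0 = 2 := by simp only [hcdef]; omega
    have hlZ : c (n-1) = 2 := by simp only [hcdef]; omega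
    have main := partA n hn c hstepZ h0Z hlZ
    have hcval : ∀ (i : Fin n), c (i : ℕ) = (m.cnt i : ℤ) := by
      intro i
      simp only [hcdef]
      rw [hNval (i : ℕ) i.isLt, Fin.eta]
    have hcval' : ∀ (j : ℕ) (hj : j < n), c j = (m.cnt ⟨j, hj⟩ : ℤ) := by
      intro j hj
      simp only [hcdef]
      rw [hNval j hj]
    have hthick : ∀ (i : Fin n), m.ThickIdx i ↔ thkP n c (i : ℕ) := by
      intro i
      constructor
      · rintro ⟨hA, hB⟩
        constructor
        · rcases Nat.eq_zero_or_pos (i : ℕ) with hz | hz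
          · exact Or.inl hz
          · right
            have hlt := hA ⟨(i:ℕ) - 1, by omega⟩ (show (i:ℕ) - 1 + 1 = (i:ℕ) by omega)
            rw [hcval' ((i:ℕ) - 1) (by omega), hcval i]
            exact_mod_cast hlt
        · by_cases hlast : (i:ℕ) + 1 = n
          · exact Or.inl hlast
          · right
            have hlt := hB ⟨(i:ℕ) + 1, by omega⟩ rfl
            rw [hcval' ((i:ℕ) + 1) (by omega), hcval i]
            exact_mod_cast hlt
      · rintro ⟨h1, h2⟩
        constructor
        · intro j hji
          have hz : (i:ℕ) ≠ 0 := by omega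
          rcases h1 with hc | hc
          · omega
          · have : (j : ℕ) = (i:ℕ) - 1 := by omega
            have hj' : c (j:ℕ) < c (i:ℕ) := by rw [this]; exact hc
            rw [hcval j, hcval i] at hj'
            exact_mod_cast hj'
        · intro j hji
          rcases h2 with hc | hc
          · exact absurd (hji.symm.trans hc) (by have := j.isLt; omega)
          · have hj' : c (j:ℕ) < c (i:ℕ) := by rw [← hji]; exact hc
            rw [hcval j, hcval i] at hj'
            exact_mod_cast hj'
    have hthin : ∀ (i : Fin n), m.ThinIdx i ↔ thnP n c (i : ℕ) := by
      intro i
      constructor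
      · rintro ⟨hz, hlast, hA, hB⟩
        refine ⟨hz, hlast, ?_, ?_⟩
        · have hlt := hA ⟨(i:ℕ) - 1, by omega⟩ (show (i:ℕ) - 1 + 1 = (i:ℕ) by omega)
          rw [hcval' ((i:ℕ) - 1) (by omega), hcval i]
          exact_mod_cast hlt
        · have hlt := hB ⟨(i:ℕ) + 1, by omega⟩ rfl
          rw [hcval' ((i:ℕ) + 1) (by omega), hcval i]
          exact_mod_cast hlt
      · rintro ⟨hz, hlast, h1, h2⟩
        refine ⟨hz, hlast, ?_, ?_⟩
        · intro j hji
          have : (j : ℕ) = (i:ℕ) - 1 := by omega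
          have hj' : c (i:ℕ) < c (j:ℕ) := by rw [this]; exact h1
          rw [hcval j, hcval i] at hj'
          exact_mod_cast hj'
        · intro j hji
          have hj' : c (i:ℕ) < c (j:ℕ) := by rw [← hji]; exact h2
          rw [hcval j, hcval i] at hj'
          exact_mod_cast hj'
    have hwidth : (m.width : ℤ) = ∑ j ∈ Finset.range n, c j := by
      rw [KnotMorse.width]
      push_cast
      rw [← Fin.sum_univ_eq_sum_range (fun j => c j) n]
      exact Finset.sum_congr rfl (fun i _ => (hcval i).symm)
    have hsumThick : (∑ i : Fin n, Set.indicator {i | m.ThickIdx i}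
          (fun i => ((m.cnt i : ℤ)) ^ 2) i)
        = ∑ j ∈ Finset.range n, if thkP n c j then c j ^ 2 else 0 := by
      rw [← Fin.sum_univ_eq_sum_range (fun j => if thkP n c j then c j ^ 2 else 0) n]
      apply Finset.sum_congr rfl
      intro i _
      by_cases ht : m.ThickIdx i
      · rw [Set.indicator_of_mem (show i ∈ {i | m.ThickIdx i} from ht), if_pos ((hthick i).1 ht), hcval i]
      · rw [Set.indicator_of_notMem (show i ∉ {i | m.ThickIdx i} from ht), if_neg (fun hc => ht ((hthick i).2 hc))]
    have hsumThin : (∑ i : Fin n, Set.indicator {i | m.ThinIdx i}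
          (fun i => ((m.cnt i : ℤ)) ^ 2) i)
        = ∑ j ∈ Finset.range n, if thnP n c j then c j ^ 2 else 0 := by
      rw [← Fin.sum_univ_eq_sum_range (fun j => if thnP n c j then c j ^ 2 else 0) n]
      apply Finset.sum_congr rfl
      intro i _
      by_cases ht : m.ThinIdx i
      · rw [Set.indicator_of_mem (show i ∈ {i | m.ThinIdx i} from ht), if_pos ((hthin i).1 ht), hcval i]
      · rw [Set.indicator_of_notMem (show i ∉ {i | m.ThinIdx i} from ht), if_neg (fun hc => ht ((hthin i).2 hc))]
    rw [hsumThick, hsumThin, ← main, hwidth]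


end
end

section
/- For any knot K in S^3, the width and trunk satisfy w(K) ≥ trunk(K)²/2. -/
open scoped Manifold Topology
open Metric Set Topology

noncomputable section

open Finset

private lemma gauss (u : ℕ) : 2 * (∑ j ∈ Finset.range u, (u - j)) = u * (u + 1) := by
  induction u with
  | zero => simp
  | succ u ih =>
    have h1 : ∑ j ∈ Finset.range (u+1), (u + 1 - j) = (∑ j ∈ Finset.range u, (u - j)) + (u + 1) := by
      rw [Finset.sum_range_succ]
      have : ∀ j ∈ Finset.range u, u + 1 - j = (u - j) + 1 := by
        intro j hj; have := Finset.mem_range.1 hj; omega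
      rw [Finset.sum_congr rfl this, Finset.sum_add_distrib]
      simp [Finset.card_range, Nat.add_assoc]
    rw [h1, Nat.mul_add, ih]; ring

lemma arith_core (n : ℕ) (χ : ℕ → ℕ) (hn : 0 < n)
    (h2 : ∀ i, i < n → 2 ≤ χ i) (heven : ∀ i, i < n → Even (χ i))
    (h0 : χ 0 ≤ 2) (hlast : χ (n-1) ≤ 2)
    (hstep₁ : ∀ i, i + 1 < n → χ (i+1) ≤ χ i + 2)
    (hstep₂ : ∀ i, i + 1 < n → χ i ≤ χ (i+1) + 2)
    (i₀ : ℕ) (hi₀ : i₀ < n) :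
    (χ i₀)^2 ≤ 2 * ∑ i ∈ Finset.range n, χ i := by
  obtain ⟨u, hu⟩ := heven i₀ hi₀
  have hu' : χ i₀ = 2 * u := by omega
  have hu1 : 1 ≤ u := by have := h2 i₀ hi₀; omega
  have down : ∀ j, j ≤ i₀ → 2 * u ≤ χ (i₀ - j) + 2 * j := by
    intro j
    induction j with
    | zero => intro _; simpa using hu'.ge
    | succ j ih =>
      intro hj
      have h1 := ih (by omega)
      have h3 := hstep₁ (i₀ - (j+1)) (by omega)
      have he : i₀ - (j+1) + 1 = i₀ - j := by omega
      rw [he] at h3; omega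
  have up : ∀ j, i₀ + j < n → 2 * u ≤ χ (i₀ + j) + 2 * j := by
    intro j
    induction j with
    | zero => intro _; simpa using hu'.ge
    | succ j ih =>
      intro hj
      have h1 := ih (by omega)
      have h3 := hstep₂ (i₀ + j) (by omega)
      have he : χ (i₀ + (j+1)) = χ (i₀ + j + 1) := rfl
      omega
  have hiu : u - 1 ≤ i₀ := by
    by_contra hcon
    have hd := down i₀ le_rfl
    simp only [Nat.sub_self] at hd; omega
  have hiu2 : i₀ + (u - 1) ≤ n - 1 := by
    by_contra hcon
    have hu3 := up (n - 1 - i₀) (by omega)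
    have h' : i₀ + (n - 1 - i₀) = n - 1 := by omega
    rw [h'] at hu3; omega
  set S₁ : Finset ℕ := (Finset.range u).image (fun j => i₀ - j) with hS₁
  set S₂ : Finset ℕ := (Finset.range (u-1)).image (fun j => i₀ + j + 1) with hS₂
  have hinj₁ : Set.InjOn (fun j => i₀ - j) (Finset.range u) := by
    intro a ha b hb hab
    simp only [Finset.mem_coe, Finset.mem_range] at ha hb
    simp only at hab; omega
  have hinj₂ : Set.InjOn (fun j => i₀ + j + 1) (Finset.range (u-1)) := by
    intro a ha b hb hab; simp only at hab; omega
  have hd : Disjoint S₁ S₂ := by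
    rw [Finset.disjoint_left]
    intro a ha₁ ha₂
    simp only [hS₁, hS₂, Finset.mem_image, Finset.mem_range] at ha₁ ha₂
    obtain ⟨j, hj, rfl⟩ := ha₁
    obtain ⟨j', hj', he⟩ := ha₂
    omega
  have hsub : S₁ ∪ S₂ ⊆ Finset.range n := by
    intro a ha
    simp only [hS₁, hS₂, Finset.mem_union, Finset.mem_image, Finset.mem_range] at ha ⊢
    rcases ha with ⟨j, hj, rfl⟩ | ⟨j, hj, rfl⟩ <;> omega
  have hsum1 : u * (u + 1) ≤ ∑ a ∈ S₁, χ a := by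
    rw [hS₁, Finset.sum_image hinj₁]
    calc u * (u+1) = 2 * ∑ j ∈ Finset.range u, (u - j) := (gauss u).symm
    _ = ∑ j ∈ Finset.range u, 2 * (u - j) := Finset.mul_sum _ _ _
    _ ≤ ∑ j ∈ Finset.range u, χ (i₀ - j) := by
        apply Finset.sum_le_sum
        intro j hj
        have h5 := down j (by have := Finset.mem_range.1 hj; omega)
        have := Finset.mem_range.1 hj; omega
  have hsum2 : (u-1) * u ≤ ∑ a ∈ S₂, χ a := by
    rw [hS₂, Finset.sum_image hinj₂]
    calc (u-1) * u = 2 * ∑ j ∈ Finset.range (u-1), (u - 1 - j) := by rw [gauss (u-1)]; congr 1; omega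
    _ = ∑ j ∈ Finset.range (u-1), 2 * (u - 1 - j) := Finset.mul_sum _ _ _
    _ ≤ ∑ j ∈ Finset.range (u-1), χ (i₀ + j + 1) := by
        apply Finset.sum_le_sum
        intro j hj
        have hj' := Finset.mem_range.1 hj
        have h5 := up (j+1) (by omega)
        have he : χ (i₀ + (j+1)) = χ (i₀ + j + 1) := rfl
        omega
  have htot : ∑ a ∈ S₁ ∪ S₂, χ a ≤ ∑ i ∈ Finset.range n, χ i := Finset.sum_le_sum_of_subset hsub
  rw [Finset.sum_union hd] at htot
  have hids : u * (u+1) + (u-1) * u = 2 * u^2 := by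
    cases u with
    | zero => simp
    | succ v => simp only [Nat.succ_sub_one]; ring
  have hq : (χ i₀)^2 = 2 * (2 * u^2) := by rw [hu']; ring
  omega

open Finset

section PartB

variable (v : ℕ → ℝ)

/-- step `k` straddles level `ρ` -/
def strB (ρ : ℝ) (k : ℕ) : Prop :=
  (v k < ρ ∧ ρ < v (k+1)) ∨ (v (k+1) < ρ ∧ ρ < v k)

open scoped Classical in
noncomputable def chiB (N : ℕ) (ρ : ℝ) : ℕ :=
  ((Finset.range (N+1)).filter (strB v ρ)).card

variable {v} {n N : ℕ} {C R : ℕ → ℝ}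
variable (hn : 0 < n) (hC : Monotone C)
  (hR1 : ∀ i, i < n → C i < R i) (hR2 : ∀ i, i < n → R i < C (i+1))
  (hv0 : v 0 = C 0) (hvN : v (N+1) = C 0)
  (hmid : ∀ k, 1 ≤ k → k ≤ N → ∃ j, 1 ≤ j ∧ j ≤ n ∧ v k = C j)
  (huniq : ∀ k k', 1 ≤ k → k ≤ N → 1 ≤ k' → k' ≤ N → v k = v k' → k = k')
  (htop : ∃ k, 1 ≤ k ∧ k ≤ N ∧ v k = C n)

section lemmas

include hC hR1 hR2 hv0 hvN hmid

-- basic: C j vs R i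
lemma CltR : ∀ j i, i < n → j ≤ i → C j < R i := by
  intro j i hi hji; exact lt_of_le_of_lt (hC hji) (hR1 i hi)

lemma RltC : ∀ j i, i < n → i + 1 ≤ j → R i < C j := by
  intro j i hi hij; exact lt_of_lt_of_le (hR2 i hi) (hC hij)

lemma vneR : ∀ k, k ≤ N + 1 → ∀ i, i < n → v k ≠ R i := by
  intro k hk i hi
  rcases Nat.eq_or_lt_of_le (Nat.zero_le k) with h0 | h0
  · rw [← h0, hv0]; exact (CltR hC hR1 hR2 hv0 hvN hmid 0 i hi (Nat.zero_le i)).ne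
  rcases Nat.eq_or_lt_of_le hk with hNk | hNk
  · rw [hNk, hvN]; exact (CltR hC hR1 hR2 hv0 hvN hmid 0 i hi (Nat.zero_le i)).ne
  · obtain ⟨j, hj1, hjn, hvk⟩ := hmid k (by omega) (by omega)
    rw [hvk]
    rcases le_or_gt j i with hji | hji
    · exact (CltR hC hR1 hR2 hv0 hvN hmid j i hi hji).ne
    · exact (RltC hC hR1 hR2 hv0 hvN hmid j i hi hji).ne'

end lemmas

end PartB

section PartB2

open scoped Classical

variable {v : ℕ → ℝ} {n N : ℕ} {C R : ℕ → ℝ}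

structure StradCtx (v : ℕ → ℝ) (n N : ℕ) (C R : ℕ → ℝ) : Prop where
  hn : 0 < n
  hC : Monotone C
  hR1 : ∀ i, i < n → C i < R i
  hR2 : ∀ i, i < n → R i < C (i+1)
  hv0 : v 0 = C 0
  hvN : v (N+1) = C 0
  hmid : ∀ k, 1 ≤ k → k ≤ N → ∃ j, 1 ≤ j ∧ j ≤ n ∧ v k = C j
  huniq : ∀ k k', 1 ≤ k → k ≤ N → 1 ≤ k' → k' ≤ N → v k = v k' → k = k'
  htop : ∃ k, 1 ≤ k ∧ k ≤ N ∧ v k = C n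

namespace StradCtx

lemma cltR (ctx : StradCtx v n N C R) : ∀ j i, i < n → j ≤ i → C j < R i :=
  fun j i hi hji => lt_of_le_of_lt (ctx.hC hji) (ctx.hR1 i hi)

lemma rltC (ctx : StradCtx v n N C R) : ∀ j i, i < n → i + 1 ≤ j → R i < C j :=
  fun j i hi hij => lt_of_lt_of_le (ctx.hR2 i hi) (ctx.hC hij)

lemma vne (ctx : StradCtx v n N C R) : ∀ k, k ≤ N + 1 → ∀ i, i < n → v k ≠ R i := by
  intro k hk i hi
  rcases Nat.eq_zero_or_pos k with h0 | h0
  · rw [h0, ctx.hv0]; exact (ctx.cltR 0 i hi (Nat.zero_le i)).ne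
  rcases Nat.eq_or_lt_of_le hk with hNk | hNk
  · rw [hNk, ctx.hvN]; exact (ctx.cltR 0 i hi (Nat.zero_le i)).ne
  · obtain ⟨j, hj1, hjn, hvk⟩ := ctx.hmid k (by omega) (by omega)
    rw [hvk]
    rcases le_or_gt j i with hji | hji
    · exact (ctx.cltR j i hi hji).ne
    · exact (ctx.rltC j i hi hji).ne'

lemma even_and_pos (ctx : StradCtx v n N C R) (i : ℕ) (hi : i < n) : ∃ u, chiB v N (R i) = 2 * u ∧ 1 ≤ u := by
  set ρ := R i with hρ
  set up : ℕ → Prop := fun k => v k < ρ ∧ ρ < v (k+1) with hup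
  set dn : ℕ → Prop := fun k => v (k+1) < ρ ∧ ρ < v k with hdn
  set f : ℕ → ℤ := fun k => if ρ < v k then 1 else 0 with hf
  have key : ∀ k ∈ Finset.range (N+1),
      f (k+1) - f k = (if up k then (1:ℤ) else 0) - (if dn k then 1 else 0) := by
    intro k hk
    have hk' : k ≤ N := by have := Finset.mem_range.1 hk; omega
    have h1 := (ctx.vne k (by omega) i hi).lt_or_gt
    have h2 := (ctx.vne (k+1) (by omega) i hi).lt_or_gt
    rcases h1 with ha | ha <;> rcases h2 with hb | hb <;>
      simp [hρ, hf, hup, hdn, ha, hb, ha.not_gt, hb.not_gt, asymm ha, asymm hb]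
  have tele : ∑ k ∈ Finset.range (N+1), (f (k+1) - f k) = 0 := by
    rw [Finset.sum_range_sub]
    have e0 : f 0 = 0 := by
      simp [hf, if_neg (asymm (show v 0 < ρ by rw [ctx.hv0]; exact ctx.cltR 0 i hi (Nat.zero_le i)))]
    have eN : f (N+1) = 0 := by
      simp [hf, if_neg (asymm (show v (N+1) < ρ by rw [ctx.hvN]; exact ctx.cltR 0 i hi (Nat.zero_le i)))]
    rw [e0, eN, sub_zero]
  rw [Finset.sum_congr rfl key, Finset.sum_sub_distrib] at tele
  rw [Finset.sum_boole, Finset.sum_boole] at tele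
  have hcards : ((Finset.range (N+1)).filter up).card = ((Finset.range (N+1)).filter dn).card := by
    have := sub_eq_zero.1 tele
    exact_mod_cast this
  have hsplit : (Finset.range (N+1)).filter (strB v ρ) =
      ((Finset.range (N+1)).filter up) ∪ ((Finset.range (N+1)).filter dn) := by
    ext k
    simp only [Finset.mem_filter, Finset.mem_union, strB, hup, hdn]
    tauto
  have hdisj : Disjoint ((Finset.range (N+1)).filter up) ((Finset.range (N+1)).filter dn) := by
    rw [Finset.disjoint_left]
    intro k hk1 hk2
    rw [Finset.mem_filter] at hk1 hk2
    exact absurd hk2.2.2 (asymm hk1.2.1)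
  have hchi : chiB v N ρ = 2 * ((Finset.range (N+1)).filter up).card := by
    rw [chiB]
    rw [hsplit, Finset.card_union_of_disjoint hdisj, ← hcards]
    ring
  refine ⟨((Finset.range (N+1)).filter up).card, hchi, ?_⟩
  -- nonemptiness of up
  obtain ⟨k₁, hk₁1, hk₁N, hk₁v⟩ := ctx.htop
  have hk₁ρ : ρ < v k₁ := by rw [hk₁v]; exact ctx.rltC n i hi (by omega)
  set F : Finset ℕ := (Finset.range k₁).filter (fun k => v k < ρ) with hF
  have h0F : 0 ∈ F := by
    rw [hF, Finset.mem_filter, Finset.mem_range]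
    exact ⟨by omega, by rw [ctx.hv0]; exact ctx.cltR 0 i hi (Nat.zero_le i)⟩
  have hFne : F.Nonempty := ⟨0, h0F⟩
  set k := F.max' hFne with hk
  have hkF : k ∈ F := F.max'_mem hFne
  have hkk₁ : k < k₁ := by have := (Finset.mem_filter.1 hkF).1; exact Finset.mem_range.1 this
  have hkv : v k < ρ := (Finset.mem_filter.1 hkF).2
  have hkup : up k := by
    refine ⟨hkv, ?_⟩
    rcases Nat.eq_or_lt_of_le (show k + 1 ≤ k₁ by omega) with he | he
    · rw [he, hk₁v]; exact ctx.rltC n i hi (by omega)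
    · have hnotF : k+1 ∉ F := fun hmem => by
        have := F.le_max' (k+1) hmem; omega
      have : ¬ (v (k+1) < ρ) := fun hlt => hnotF (by rw [hF, Finset.mem_filter, Finset.mem_range]; exact ⟨he, hlt⟩)
      rcases (ctx.vne (k+1) (by omega) i hi).lt_or_gt with h | h
      · exact absurd h this
      · exact h
  have : k ∈ (Finset.range (N+1)).filter up := by
    rw [Finset.mem_filter, Finset.mem_range]; exact ⟨by omega, hkup⟩
  have := Finset.card_pos.2 ⟨k, this⟩
  omega


lemma zero_le_two' (ctx : StradCtx v n N C R) : chiB v N (R 0) ≤ 2 := by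
  have hsub : (Finset.range (N+1)).filter (strB v (R 0)) ⊆ insert 0 {N} := by
    intro k hk
    rw [Finset.mem_filter, Finset.mem_range] at hk
    obtain ⟨hkN, hstr⟩ := hk
    have hmidge : ∀ e, 1 ≤ e → e ≤ N → ¬ (v e < R 0) := by
      intro e he1 heN hlt
      obtain ⟨j, hj1, hjn, hve⟩ := ctx.hmid e he1 heN
      rw [hve] at hlt
      exact absurd hlt (asymm (ctx.rltC j 0 ctx.hn (by omega)))
    simp only [Finset.mem_insert, Finset.mem_singleton]
    rcases hstr with ⟨h1, _⟩ | ⟨h1, _⟩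
    · -- v k < R 0
      by_contra hcon
      push_neg at hcon
      exact hmidge k (by omega) (by omega) h1
    · -- v (k+1) < R 0
      by_contra hcon
      push_neg at hcon
      have hk1 : k + 1 ≤ N := by omega
      exact hmidge (k+1) (by omega) hk1 h1
  calc chiB v N (R 0) ≤ (insert 0 ({N} : Finset ℕ)).card := Finset.card_le_card hsub
  _ ≤ 2 := by
      refine le_trans (Finset.card_insert_le _ _) ?_
      simp

lemma last_le_two' (ctx : StradCtx v n N C R) : chiB v N (R (n-1)) ≤ 2 := by
  obtain ⟨k₁, hk₁1, hk₁N, hk₁v⟩ := ctx.htop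
  have hin : n - 1 < n := by have := ctx.hn; omega
  have hsub : (Finset.range (N+1)).filter (strB v (R (n-1))) ⊆ insert (k₁ - 1) {k₁} := by
    intro k hk
    rw [Finset.mem_filter, Finset.mem_range] at hk
    obtain ⟨hkN, hstr⟩ := hk
    -- upper endpoint
    have hupper : ∀ e, e ≤ N + 1 → R (n-1) < v e → e = k₁ := by
      intro e heN hgt
      have he1 : 1 ≤ e := by
        rcases Nat.eq_zero_or_pos e with h0 | h0
        · rw [h0, ctx.hv0] at hgt
          exact absurd hgt (asymm (ctx.cltR 0 (n-1) hin (Nat.zero_le _)))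
        · exact h0
      have heN' : e ≤ N := by
        rcases Nat.eq_or_lt_of_le heN with hNe | hNe
        · rw [hNe, ctx.hvN] at hgt
          exact absurd hgt (asymm (ctx.cltR 0 (n-1) hin (Nat.zero_le _)))
        · omega
      obtain ⟨j, hj1, hjn, hve⟩ := ctx.hmid e he1 heN'
      have hjn' : j = n := by
        by_contra hcon
        have : j ≤ n - 1 := by omega
        rw [hve] at hgt
        exact absurd hgt (asymm (ctx.cltR j (n-1) hin this))
      exact ctx.huniq e k₁ he1 heN' hk₁1 hk₁N (by rw [hve, hjn', hk₁v])
    simp only [Finset.mem_insert, Finset.mem_singleton]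
    rcases hstr with ⟨_, h2⟩ | ⟨_, h2⟩
    · -- R < v (k+1) : e = k+1
      have := hupper (k+1) (by omega) h2
      omega
    · -- R < v k
      have := hupper k (by omega) h2
      omega
  calc chiB v N (R (n-1)) ≤ (insert (k₁-1) ({k₁} : Finset ℕ)).card := Finset.card_le_card hsub
  _ ≤ 2 := by
      refine le_trans (Finset.card_insert_le _ _) ?_
      simp

lemma value_mid' (ctx : StradCtx v n N C R) (i : ℕ) (hi : i + 1 < n) :
    ∀ e, e ≤ N + 1 → R i < v e → v e < R (i+1) → 1 ≤ e ∧ e ≤ N ∧ v e = C (i+1) := by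
  intro e heN hlo hhi
  have hin : i < n := by omega
  have he1 : 1 ≤ e := by
    rcases Nat.eq_zero_or_pos e with h0 | h0
    · rw [h0, ctx.hv0] at hlo
      exact absurd hlo (asymm (ctx.cltR 0 i hin (Nat.zero_le _)))
    · exact h0
  have heN' : e ≤ N := by
    rcases Nat.eq_or_lt_of_le heN with hNe | hNe
    · rw [hNe, ctx.hvN] at hlo
      exact absurd hlo (asymm (ctx.cltR 0 i hin (Nat.zero_le _)))
    · omega
  obtain ⟨j, hj1, hjn, hve⟩ := ctx.hmid e he1 heN'
  have hji : i + 1 ≤ j := by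
    by_contra hcon
    rw [hve] at hlo
    exact absurd hlo (asymm (ctx.cltR j i hin (by omega)))
  have hji2 : j ≤ i + 1 := by
    by_contra hcon
    rw [hve] at hhi
    exact absurd hhi (asymm (ctx.rltC j (i+1) hi (by omega)))
  refine ⟨he1, heN', by rw [hve]; congr 1; omega⟩

lemma RltR (ctx : StradCtx v n N C R) (i : ℕ) (hi : i + 1 < n) : R i < R (i+1) :=
  lt_trans (ctx.hR2 i (by omega)) (ctx.hR1 (i+1) hi)

lemma diff_endpoint (ctx : StradCtx v n N C R) (i : ℕ) (hi : i + 1 < n) (k : ℕ) (hkN : k ≤ N)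
    (h₁ : strB v (R i) k ∨ strB v (R (i+1)) k)
    (h₂ : ¬ (strB v (R i) k ∧ strB v (R (i+1)) k)) :
    ∃ e, 1 ≤ e ∧ e ≤ N ∧ v e = C (i+1) ∧ (e = k ∨ e = k + 1) := by
  have hin : i < n := by omega
  have hRR := ctx.RltR i hi
  have t1 := (ctx.vne k (by omega) i hin).lt_or_gt
  have t2 := (ctx.vne (k+1) (by omega) i hin).lt_or_gt
  have t3 := (ctx.vne k (by omega) (i+1) hi).lt_or_gt
  have t4 := (ctx.vne (k+1) (by omega) (i+1) hi).lt_or_gt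
  simp only [strB] at h₁ h₂
  rcases t3 with a3 | a3
  · rcases t1 with a1 | a1
    · -- v k < R i  (zone B for k)
      rcases t4 with a4 | a4
      · rcases t2 with a2 | a2
        · -- both in zone B: no straddle
          exfalso
          rcases h₁ with (⟨x,y⟩|⟨x,y⟩) | (⟨x,y⟩|⟨x,y⟩) <;> linarith
        · -- v (k+1) in M
          obtain ⟨he1, heN, hev⟩ := ctx.value_mid' i hi (k+1) (by omega) a2 a4
          exact ⟨k+1, he1, heN, hev, Or.inr rfl⟩
      · -- v (k+1) in A : straddles both
        exfalso
        exact h₂ ⟨Or.inl ⟨a1, by linarith⟩, Or.inl ⟨by linarith, a4⟩⟩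
    · -- v k in M
      obtain ⟨he1, heN, hev⟩ := ctx.value_mid' i hi k (by omega) a1 a3
      exact ⟨k, he1, heN, hev, Or.inl rfl⟩
  · -- v k in A : R (i+1) < v k
    rcases t2 with a2 | a2
    · -- v (k+1) in B : straddles both (downward)
      exfalso
      exact h₂ ⟨Or.inr ⟨a2, by linarith⟩, Or.inr ⟨by linarith, a3⟩⟩
    · rcases t4 with a4 | a4
      · -- v (k+1) in M
        obtain ⟨he1, heN, hev⟩ := ctx.value_mid' i hi (k+1) (by omega) a2 a4
        exact ⟨k+1, he1, heN, hev, Or.inr rfl⟩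
      · -- both in A: no straddle
        exfalso
        rcases h₁ with (⟨x,y⟩|⟨x,y⟩) | (⟨x,y⟩|⟨x,y⟩) <;> linarith


lemma card_le_aux (ctx : StradCtx v n N C R) (i : ℕ) (hi : i + 1 < n) (ρa ρb : ℝ)
    (hab : ∀ k, k ≤ N → strB v ρa k → ¬ strB v ρb k →
      ∃ e, 1 ≤ e ∧ e ≤ N ∧ v e = C (i+1) ∧ (e = k ∨ e = k + 1)) :
    chiB v N ρa ≤ chiB v N ρb + 2 := by
  classical
  simp only [chiB]
  by_cases hex : ∃ k₂, 1 ≤ k₂ ∧ k₂ ≤ N ∧ v k₂ = C (i+1)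
  · obtain ⟨k₂, hk₂1, hk₂N, hk₂v⟩ := hex
    have hsub : (Finset.range (N+1)).filter (strB v ρa) ⊆
        ((Finset.range (N+1)).filter (strB v ρb)) ∪ insert (k₂-1) {k₂} := by
      intro k hk
      rw [Finset.mem_filter, Finset.mem_range] at hk
      by_cases hkB : strB v ρb k
      · exact Finset.mem_union_left _ (Finset.mem_filter.2 ⟨Finset.mem_range.2 hk.1, hkB⟩)
      · obtain ⟨e, he1, heN, hev, hek⟩ := hab k (by omega) hk.2 hkB
        have : e = k₂ := ctx.huniq e k₂ he1 heN hk₂1 hk₂N (by rw [hev, hk₂v])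
        apply Finset.mem_union_right
        simp only [Finset.mem_insert, Finset.mem_singleton]
        omega
    refine le_trans (Finset.card_le_card hsub) ?_
    refine le_trans (Finset.card_union_le _ _) ?_
    have h1 := Finset.card_insert_le (k₂-1) ({k₂} : Finset ℕ)
    have h2 : ({k₂} : Finset ℕ).card = 1 := Finset.card_singleton _
    omega
  · refine le_trans (Finset.card_le_card ?_) (Nat.le_add_right _ 2)
    intro k hk
    rw [Finset.mem_filter, Finset.mem_range] at hk
    by_cases hkB : strB v ρb k
    · exact Finset.mem_filter.2 ⟨Finset.mem_range.2 hk.1, hkB⟩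
    · obtain ⟨e, he1, heN, hev, _⟩ := hab k (by omega) hk.2 hkB
      exact absurd ⟨e, he1, heN, hev⟩ hex

lemma step₁' (ctx : StradCtx v n N C R) (i : ℕ) (hi : i + 1 < n) :
    chiB v N (R (i+1)) ≤ chiB v N (R i) + 2 :=
  ctx.card_le_aux i hi _ _ (fun k hk ha hb =>
    ctx.diff_endpoint i hi k hk (Or.inr ha) (fun hc => hb hc.1))

lemma step₂' (ctx : StradCtx v n N C R) (i : ℕ) (hi : i + 1 < n) :
    chiB v N (R i) ≤ chiB v N (R (i+1)) + 2 :=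
  ctx.card_le_aux i hi _ _ (fun k hk ha hb =>
    ctx.diff_endpoint i hi k hk (Or.inl ha) (fun hc => hb hc.2))

theorem master (ctx : StradCtx v n N C R) (i₀ : ℕ) (hi₀ : i₀ < n) :
    (chiB v N (R i₀))^2 ≤ 2 * ∑ i ∈ Finset.range n, chiB v N (R i) := by
  apply arith_core n (fun i => chiB v N (R i)) ctx.hn
  · intro i hi
    obtain ⟨u, hu, hu1⟩ := ctx.even_and_pos i hi
    omega
  · intro i hi
    obtain ⟨u, hu, _⟩ := ctx.even_and_pos i hi
    exact ⟨u, by omega⟩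
  · exact ctx.zero_le_two'
  · exact ctx.last_le_two'
  · intro i hi; exact ctx.step₁' i hi
  · intro i hi; exact ctx.step₂' i hi
  · exact hi₀

end StradCtx

end PartB2

open Set

lemma strict_of_no_extr {f : ℝ → ℝ} (hf : Continuous f) {a b : ℝ} (hab : a < b)
    (hne : ∀ t, t ∈ Set.Ioo a b → ¬ IsLocalExtr f t) :
    StrictMonoOn f (Set.Icc a b) ∨ StrictAntiOn f (Set.Icc a b) := by
  have key : ∀ x y, x ∈ Set.Icc a b → y ∈ Set.Icc a b → x < y → f x ≠ f y := by
    intro x y hx hy hxy hfeq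
    obtain ⟨z, hz, hzmax⟩ := isCompact_Icc.exists_isMaxOn (Set.nonempty_Icc.2 hxy.le)
      hf.continuousOn
    obtain ⟨w, hw, hwmin⟩ := isCompact_Icc.exists_isMinOn (Set.nonempty_Icc.2 hxy.le)
      hf.continuousOn
    have hIoo : Set.Ioo x y ⊆ Set.Ioo a b := Set.Ioo_subset_Ioo hx.1 hy.2
    by_cases hz' : f x < f z
    · have hz1 : x < z := lt_of_le_of_ne hz.1 (fun he => by rw [← he] at hz'; exact lt_irrefl _ hz')
      have hz2 : z < y := lt_of_le_of_ne hz.2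
        (fun he => by rw [he, ← hfeq] at hz'; exact lt_irrefl _ hz')
      exact hne z (hIoo ⟨hz1, hz2⟩) ((hzmax.isLocalMax (Icc_mem_nhds hz1 hz2)).isExtr)
    · by_cases hw' : f w < f x
      · have hw1 : x < w := lt_of_le_of_ne hw.1
          (fun he => by rw [← he] at hw'; exact lt_irrefl _ hw')
        have hw2 : w < y := lt_of_le_of_ne hw.2
          (fun he => by rw [he, ← hfeq] at hw'; exact lt_irrefl _ hw')
        exact hne w (hIoo ⟨hw1, hw2⟩) ((hwmin.isLocalMin (Icc_mem_nhds hw1 hw2)).isExtr)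
      · push_neg at hz' hw'
        set tm := (x + y) / 2 with htm
        have htm1 : x < tm := by rw [htm]; linarith
        have htm2 : tm < y := by rw [htm]; linarith
        have htmI : tm ∈ Set.Icc x y := ⟨htm1.le, htm2.le⟩
        have hmax : IsMaxOn f (Set.Icc x y) tm := by
          intro t ht
          have h1 : f t ≤ f z := hzmax ht
          have h2 : f w ≤ f tm := hwmin htmI
          simp only [Set.mem_setOf_eq]
          linarith
        exact hne tm (hIoo ⟨htm1, htm2⟩) ((hmax.isLocalMax (Icc_mem_nhds htm1 htm2)).isExtr)
  have hinj : Set.InjOn f (Set.Icc a b) := by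
    intro x hx y hy hxy
    rcases lt_trichotomy x y with h | h | h
    · exact absurd hxy (key x y hx hy h)
    · exact h
    · exact absurd hxy.symm (key y x hy hx h)
  exact ContinuousOn.strictMonoOn_of_injOn_Icc' hab.le hf.continuousOn hinj

section PartD

open Filter Topology Set

noncomputable def Cfun {K : Set S3} (m : KnotMorse K) : ℕ → ℝ :=
  fun j => m.c ⟨min j m.n, Nat.lt_succ_of_le (Nat.min_le_right j m.n)⟩

noncomputable def Rfun {K : Set S3} (m : KnotMorse K) : ℕ → ℝ :=
  fun i => if h : i < m.n then m.midpt ⟨i, h⟩ else 0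

theorem knotmorse_key {K : Set S3} (hK : IsKnot K) (m : KnotMorse K) (hn : 0 < m.n) :
    ∃ (N : ℕ) (v : ℕ → ℝ), StradCtx v m.n N (Cfun m) (Rfun m) ∧
      ∀ i : Fin m.n, m.cnt i = chiB v N (Rfun m i.val) := by
  classical
  obtain ⟨φ⟩ := hK
  have hcont : Continuous m.h := m.smooth_twoCrit.1.continuous
  have twopi : (0:ℝ) < 2 * Real.pi := Real.two_pi_pos
  -- C basics
  have hCmono : Monotone (Cfun m) := by
    intro j j' hjj
    exact m.c_mono.monotone (by simp only [Fin.mk_le_mk]; omega)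
  have hCeq : ∀ j : Fin (m.n+1), Cfun m j.val = m.c j := fun j =>
    congrArg m.c (Fin.ext (Nat.min_eq_left (Nat.lt_succ_iff.1 j.isLt)))
  have hR1 : ∀ i, i < m.n → Cfun m i < Rfun m i := by
    intro i hi
    have hcs : m.c (Fin.castSucc ⟨i, hi⟩) < m.c (Fin.succ ⟨i, hi⟩) :=
      m.c_mono Fin.castSucc_lt_succ
    have h1 : Cfun m i = m.c (Fin.castSucc ⟨i, hi⟩) := hCeq (Fin.castSucc ⟨i, hi⟩)
    simp only [Rfun, dif_pos hi, KnotMorse.midpt]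
    rw [h1]; linarith
  have hR2 : ∀ i, i < m.n → Rfun m i < Cfun m (i+1) := by
    intro i hi
    have hcs : m.c (Fin.castSucc ⟨i, hi⟩) < m.c (Fin.succ ⟨i, hi⟩) :=
      m.c_mono Fin.castSucc_lt_succ
    have h1 : Cfun m (i+1) = m.c (Fin.succ ⟨i, hi⟩) := hCeq (Fin.succ ⟨i, hi⟩)
    simp only [Rfun, dif_pos hi, KnotMorse.midpt]
    rw [h1]; linarith
  -- the minimum critical point
  obtain ⟨p₀, ⟨hp₀K, hp₀ext, hp₀val⟩, hp₀uniq⟩ := m.crit_exists 0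
  -- parametrization
  set z₀ : Circle := φ ⟨p₀, hp₀K⟩ with hz₀
  set E : ℝ → S3 := fun t => ((φ.symm (Circle.exp t * z₀) : ↥K) : S3) with hE
  have hEK : ∀ t, E t ∈ K := fun t => (φ.symm (Circle.exp t * z₀)).2
  have hEc : Continuous E := by
    apply continuous_subtype_val.comp
    exact φ.symm.continuous.comp ((map_continuous Circle.exp).mul continuous_const)
  set g : ℝ → ℝ := fun t => m.h (E t) with hg
  have hgc : Continuous g := hcont.comp hEc
  have hE0 : E 0 = p₀ := by
    simp only [hE, Circle.exp_zero, one_mul, hz₀, Homeomorph.symm_apply_apply]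
  have hE2π : E (2 * Real.pi) = E 0 := by
    simp only [hE, Circle.exp_zero, Circle.exp_two_pi]
  have hEinj : Set.InjOn E (Ico 0 (2*Real.pi)) := by
    intro s hs t ht hst
    have h1 : φ.symm (Circle.exp s * z₀) = φ.symm (Circle.exp t * z₀) :=
      Subtype.coe_injective hst
    have h2 : Circle.exp s * z₀ = Circle.exp t * z₀ := φ.symm.injective h1
    have h3 : Circle.exp s = Circle.exp t := mul_right_cancel h2
    obtain ⟨mm, hmm⟩ := Circle.exp_eq_exp.1 h3
    rcases lt_trichotomy mm 0 with hm | hm | hm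
    · exfalso
      have : (mm:ℝ) ≤ -1 := by exact_mod_cast (by omega : mm ≤ -1)
      have := hs.1; have := ht.2; nlinarith [Real.pi_pos]
    · rw [hm] at hmm; simpa using hmm
    · exfalso
      have : (1:ℝ) ≤ (mm:ℝ) := by exact_mod_cast hm
      have := hs.2; have := ht.1; nlinarith [Real.pi_pos]
  have hEsurj : ∀ x, x ∈ K → ∃ t, t ∈ Ico 0 (2*Real.pi) ∧ E t = x := by
    intro x hx
    set z : Circle := φ ⟨x, hx⟩ * z₀⁻¹ with hzdef
    set t₀ : ℝ := Complex.arg (z : ℂ) with ht₀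
    set t : ℝ := toIcoMod twopi 0 t₀ with ht
    have htmem : t ∈ Ico 0 (2*Real.pi) := by
      have := toIcoMod_mem_Ico twopi 0 t₀
      simpa using this
    have hdiff := self_sub_toIcoMod twopi 0 t₀
    have hexp : Circle.exp t = Circle.exp t₀ := by
      apply Circle.exp_eq_exp.2
      refine ⟨-(toIcoDiv twopi 0 t₀), ?_⟩
      have : t₀ - t = (toIcoDiv twopi 0 t₀ : ℝ) * (2 * Real.pi) := by
        rw [← zsmul_eq_mul]; exact hdiff
      push_cast
      linarith
    refine ⟨t, htmem, ?_⟩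
    have hzexp : Circle.exp t₀ = z := Circle.exp_arg z
    simp only [hE, hexp, hzexp, hzdef, inv_mul_cancel_right]
    rw [Homeomorph.symm_apply_apply]
  have hg0 : g 0 = m.c 0 := by rw [hg]; simp only [hE0]; exact hp₀val
  have hg2π : g (2*Real.pi) = m.c 0 := by rw [hg]; simp only [hE2π]; rw [← hg0]
  -- transfer of extrema
  have htrans₁ : ∀ t : ℝ, IsLocalExtrOn m.h K (E t) → IsLocalExtr g t := by
    intro t hext
    have htt : Filter.Tendsto E (𝓝 t) (𝓝[K] (E t)) := by
      rw [tendsto_nhdsWithin_iff]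
      exact ⟨hEc.tendsto t, Filter.Eventually.of_forall hEK⟩
    exact hext.comp_tendsto htt
  have harc : ∀ t, t ∈ Ioo 0 (2*Real.pi) → ∀ δ, 0 < δ →
      Ioo (t-δ) (t+δ) ⊆ Ioo 0 (2*Real.pi) →
      ∃ U ∈ 𝓝[K] (E t), U ⊆ E '' Ioo (t-δ) (t+δ) := by
    intro t htI δ hδ hsub
    set Cs : Set ℝ := Icc 0 (2*Real.pi) \ Ioo (t-δ) (t+δ) with hCs
    have hCcomp : IsCompact Cs := isCompact_Icc.diff isOpen_Ioo
    have hcl : IsClosed (E '' Cs) := (hCcomp.image hEc).isClosed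
    have hnotin : E t ∉ E '' Cs := by
      rintro ⟨s, hsC, hsE⟩
      obtain ⟨⟨hs0, hs2π⟩, hsIoo⟩ := hsC
      rcases eq_or_lt_of_le hs2π with h2 | h2
      · -- s = 2π
        have : E 0 = E t := by rw [← hE2π, ← h2, hsE]
        have : (0:ℝ) = t := hEinj ⟨le_refl 0, twopi⟩ ⟨htI.1.le, htI.2⟩ this
        exact absurd this.symm htI.1.ne'
      · have : s = t := hEinj ⟨hs0, h2⟩ ⟨htI.1.le, htI.2⟩ hsE
        exact hsIoo (by rw [this]; exact ⟨by linarith, by linarith⟩)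
    refine ⟨(E '' Cs)ᶜ ∩ K, Filter.inter_mem
      (mem_nhdsWithin_of_mem_nhds (hcl.isOpen_compl.mem_nhds hnotin)) self_mem_nhdsWithin, ?_⟩
    rintro x ⟨hxc, hxK⟩
    obtain ⟨s, hsIco, hsE⟩ := hEsurj x hxK
    have hsC : s ∉ Cs := fun hs => hxc ⟨s, hs, hsE⟩
    have hsIoo : s ∈ Ioo (t-δ) (t+δ) := by
      by_contra hcon
      exact hsC ⟨⟨hsIco.1, hsIco.2.le⟩, hcon⟩
    exact ⟨s, hsIoo, hsE⟩
  have htrans₂ : ∀ t, t ∈ Ioo 0 (2*Real.pi) → IsLocalExtr g t → IsLocalExtrOn m.h K (E t) := by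
    intro t htI hext
    have hgen : ∀ (P : ℝ → Prop), (∀ᶠ s in 𝓝 t, P s) →
        ∃ δ, 0 < δ ∧ Ioo (t-δ) (t+δ) ⊆ Ioo 0 (2*Real.pi) ∧ ∀ s ∈ Ioo (t-δ) (t+δ), P s := by
      intro P hP
      obtain ⟨l, u, htlu, hlu⟩ := mem_nhds_iff_exists_Ioo_subset.1 hP
      set δ₀ : ℝ := min (t - l) (min (u - t) (min t (2*Real.pi - t))) with hδ₀
      have k1 : δ₀ ≤ t - l := min_le_left _ _
      have k2 : δ₀ ≤ u - t := le_trans (min_le_right _ _) (min_le_left _ _)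
      have k3 : δ₀ ≤ t := le_trans (min_le_right _ _) (le_trans (min_le_right _ _) (min_le_left _ _))
      have k4 : δ₀ ≤ 2*Real.pi - t :=
        le_trans (min_le_right _ _) (le_trans (min_le_right _ _) (min_le_right _ _))
      refine ⟨δ₀, ?_, ?_, ?_⟩
      · rw [hδ₀]
        simp only [lt_min_iff]
        exact ⟨by linarith [htlu.1], by linarith [htlu.2], htI.1, by linarith [htI.2]⟩
      · rintro s ⟨h1, h2⟩
        exact ⟨by linarith, by linarith⟩
      · rintro s ⟨h1, h2⟩
        exact hlu ⟨by linarith, by linarith⟩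
    rcases hext with hmin | hmax
    · -- local min
      obtain ⟨δ, hδ, hδsub, hδP⟩ := hgen _ hmin
      obtain ⟨U, hU, hUsub⟩ := harc t htI δ hδ hδsub
      left
      apply Filter.mem_of_superset hU
      rintro x hx
      obtain ⟨s, hsI, rfl⟩ := hUsub hx
      exact hδP s hsI
    · obtain ⟨δ, hδ, hδsub, hδP⟩ := hgen _ hmax
      obtain ⟨U, hU, hUsub⟩ := harc t htI δ hδ hδsub
      right
      apply Filter.mem_of_superset hU
      rintro x hx
      obtain ⟨s, hsI, rfl⟩ := hUsub hx
      exact hδP s hsI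
  -- interior points are not at the minimum level
  have hlevel0 : ∀ t, t ∈ Ioo 0 (2*Real.pi) → g t ≠ m.c 0 := by
    intro t htI heq
    have hminon : IsMinOn m.h K (E t) := by
      apply isMinOn_iff.2
      intro y hy
      have := (m.between y hy).1
      calc m.h (E t) = m.c 0 := heq
      _ ≤ m.h y := this
    have hextr : IsLocalExtrOn m.h K (E t) := hminon.localize.isExtr
    have : E t = p₀ := hp₀uniq (E t) ⟨hEK t, hextr, heq⟩
    have h0 : E t = E 0 := by rw [this, hE0]
    have : t = (0:ℝ) := hEinj ⟨htI.1.le, htI.2⟩ ⟨le_refl 0, twopi⟩ h0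
    exact htI.1.ne' this

  -- the critical set of g
  set Tc : Set ℝ := {t | t ∈ Ioo 0 (2*Real.pi) ∧ IsLocalExtr g t} with hTc
  have hTfin : Tc.Finite := by
    have hidx : ∀ t ∈ Tc, ∃ j : Fin (m.n+1), m.h (E t) = m.c j := by
      intro t ht
      exact m.crit_complete (E t) (hEK t) (htrans₂ t ht.1 ht.2)
    set idx : ℝ → Fin (m.n+1) := fun t =>
      if h : ∃ j : Fin (m.n+1), m.h (E t) = m.c j then h.choose else 0 with hidxdef
    have hval : ∀ t ∈ Tc, m.h (E t) = m.c (idx t) := by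
      intro t ht
      have h := hidx t ht
      simp only [hidxdef, dif_pos h]
      exact h.choose_spec
    apply Set.Finite.of_finite_image (f := idx) (Set.toFinite _)
    intro t ht t' ht' heq
    obtain ⟨q, hq, hquniq⟩ := m.crit_exists (idx t)
    have h1 : E t = q := hquniq (E t) ⟨hEK t, htrans₂ t ht.1 ht.2, hval t ht⟩
    have h2 : E t' = q := hquniq (E t')
      ⟨hEK t', htrans₂ t' ht'.1 ht'.2, (hval t' ht').trans (congrArg m.c heq.symm)⟩
    have hEeq : E t = E t' := by rw [h1, h2]
    exact hEinj (Ioo_subset_Ico_self ht.1) (Ioo_subset_Ico_self ht'.1) hEeq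
  set TF : Finset ℝ := hTfin.toFinset with hTF
  set N : ℕ := TF.card with hNdef
  set iso := TF.orderIsoOfFin rfl with hiso
  set A : ℕ → ℝ := fun k => if hk0 : k = 0 then 0 else
    if hkN : k ≤ N then ((iso ⟨k-1, by omega⟩ : TF) : ℝ) else 2*Real.pi with hA
  have hA0 : A 0 = 0 := by show dite _ _ _ = _; exact dif_pos rfl
  have hAeq : ∀ k (h1 : 1 ≤ k) (h2 : k ≤ N), A k = ((iso ⟨k-1, by omega⟩ : TF) : ℝ) := by
    intro k h1 h2
    show dite _ _ _ = _
    exact (dif_neg (by omega)).trans (dif_pos h2)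
  have hAbig : ∀ k, N < k → A k = 2*Real.pi := by
    intro k hk
    show dite _ _ _ = _
    exact (dif_neg (by omega)).trans (dif_neg (by omega))
  have hAmid : ∀ k, 1 ≤ k → k ≤ N → A k ∈ Tc := by
    intro k h1 h2
    rw [hAeq k h1 h2]
    have hmem := (iso ⟨k-1, by omega⟩).2
    exact hTfin.mem_toFinset.mp hmem
  have hAlt : ∀ k l, l ≤ N + 1 → k < l → A k < A l := by
    intro k l hlN hkl
    rcases Nat.eq_zero_or_pos k with hk0 | hk0
    · rw [hk0, hA0]
      rcases Nat.eq_or_lt_of_le hlN with hl | hl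
      · rw [hl, hAbig (N+1) (by omega)]; exact twopi
      · obtain ⟨hIoo, -⟩ := hAmid l (by omega) (by omega)
        exact hIoo.1
    · have hkN : k ≤ N := by omega
      rcases Nat.eq_or_lt_of_le hlN with hl | hl
      · rw [hl, hAbig (N+1) (by omega)]
        obtain ⟨hIoo, -⟩ := hAmid k hk0 hkN
        exact hIoo.2
      · have hlN' : l ≤ N := by omega
        rw [hAeq k hk0 hkN, hAeq l (by omega) hlN']
        have hfin : (⟨k-1, by omega⟩ : Fin N) < ⟨l-1, by omega⟩ := by
          rw [Fin.mk_lt_mk]; omega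
        exact Subtype.coe_lt_coe.2 (iso.lt_iff_lt.2 hfin)
  have hAmono_le : ∀ k l, l ≤ N + 1 → k ≤ l → A k ≤ A l := by
    intro k l h1 h2
    rcases eq_or_lt_of_le h2 with h | h
    · rw [h]
    · exact (hAlt k l h1 h).le
  have hAlt_iff : ∀ k l, k ≤ N+1 → l ≤ N+1 → (A k < A l ↔ k < l) := by
    intro k l hk hl
    constructor
    · intro h
      by_contra hcon
      exact absurd h (not_lt.2 (hAmono_le l k hk (by omega)))
    · exact hAlt k l hl
  have hAinj : ∀ k l, k ≤ N+1 → l ≤ N+1 → A k = A l → k = l := by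
    intro k l hk hl he
    by_contra hcon
    rcases Nat.lt_or_ge k l with h | h
    · exact absurd he (hAlt k l hl h).ne
    · exact absurd he.symm (hAlt l k hk (by omega)).ne
  have hAcover : ∀ t ∈ Tc, ∃ k, 1 ≤ k ∧ k ≤ N ∧ A k = t := by
    intro t ht
    have ht' : t ∈ TF := by rw [hTF, Set.Finite.mem_toFinset]; exact ht
    set j := iso.symm ⟨t, ht'⟩ with hj
    have hjN : j.val < N := j.isLt
    refine ⟨j.val + 1, by omega, by omega, ?_⟩
    rw [hAeq (j.val + 1) (by omega) (by omega)]
    have hje : (⟨j.val + 1 - 1, by omega⟩ : Fin N) = j := Fin.ext (by simp)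
    rw [hje, hj]
    simp
  have hAnogap : ∀ k, k ≤ N → ∀ t, A k < t → t < A (k+1) → t ∉ Tc := by
    intro k hk t h1 h2 htT
    obtain ⟨l, hl1, hlN, hlA⟩ := hAcover t htT
    rw [← hlA] at h1 h2
    have e1 : k < l := (hAlt_iff k l (by omega) (by omega)).1 h1
    have e2 : l < k+1 := (hAlt_iff l (k+1) (by omega) (by omega)).1 h2
    omega
  have harcsub : ∀ k, k ≤ N → Ioo (A k) (A (k+1)) ⊆ Ioo 0 (2*Real.pi) := by
    intro k hk t ht
    have h1 : 0 ≤ A k := by rw [← hA0]; exact hAmono_le 0 k (by omega) (by omega)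
    have h2 : A (k+1) ≤ 2*Real.pi := by
      rw [← hAbig (N+1) (by omega)]
      exact hAmono_le (k+1) (N+1) (by omega) (by omega)
    exact ⟨by linarith [ht.1], by linarith [ht.2]⟩
  -- the value sequence
  set v : ℕ → ℝ := fun k => g (A k) with hv
  have hc00 : Cfun m 0 = m.c 0 := by
    have := hCeq (0 : Fin (m.n+1)); rwa [Fin.val_zero] at this
  have hv0 : v 0 = Cfun m 0 := by show g (A 0) = _; rw [hA0, hg0, hc00]
  have hvN : v (N+1) = Cfun m 0 := by
    show g (A (N+1)) = _; rw [hAbig (N+1) (by omega), hg2π, hc00]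
  have hvmid : ∀ k, 1 ≤ k → k ≤ N → ∃ j, 1 ≤ j ∧ j ≤ m.n ∧ v k = Cfun m j := by
    intro k h1 h2
    have hTk := hAmid k h1 h2
    have hcrit : IsLocalExtrOn m.h K (E (A k)) := htrans₂ _ hTk.1 hTk.2
    obtain ⟨jf, hjf⟩ := m.crit_complete (E (A k)) (hEK _) hcrit
    have hj0 : jf.val ≠ 0 := by
      intro h0
      have hjf0 : jf = 0 := Fin.ext (by simp [h0])
      rw [hjf0] at hjf
      exact hlevel0 (A k) hTk.1 hjf
    exact ⟨jf.val, by omega, by have := jf.isLt; omega, by rw [hCeq jf]; exact hjf⟩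
  have hvuniq : ∀ k k', 1 ≤ k → k ≤ N → 1 ≤ k' → k' ≤ N → v k = v k' → k = k' := by
    intro k k' h1 h2 h1' h2' hvv
    have hTk := hAmid k h1 h2
    have hTk' := hAmid k' h1' h2'
    obtain ⟨jf, hjf⟩ := m.crit_complete (E (A k)) (hEK _) (htrans₂ _ hTk.1 hTk.2)
    obtain ⟨q, hq, hquniq⟩ := m.crit_exists jf
    have e1 : E (A k) = q := hquniq _ ⟨hEK _, htrans₂ _ hTk.1 hTk.2, hjf⟩
    have e2 : E (A k') = q := hquniq _ ⟨hEK _, htrans₂ _ hTk'.1 hTk'.2, by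
      show m.h (E (A k')) = m.c jf
      have hgg : g (A k') = g (A k) := hvv.symm
      rw [show m.h (E (A k')) = g (A k') from rfl, hgg]
      exact hjf⟩
    have eE : E (A k) = E (A k') := by rw [e1, e2]
    have eA : A k = A k' := hEinj (Ioo_subset_Ico_self hTk.1) (Ioo_subset_Ico_self hTk'.1) eE
    exact hAinj k k' (by omega) (by omega) eA
  have hvtop : ∃ k, 1 ≤ k ∧ k ≤ N ∧ v k = Cfun m m.n := by
    obtain ⟨xq, ⟨hxK, hxext, hxval⟩, -⟩ := m.crit_exists (Fin.last m.n)
    obtain ⟨s, hsIco, hsE⟩ := hEsurj xq hxK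
    have hclast : Cfun m m.n = m.c (Fin.last m.n) := by
      have := hCeq (Fin.last m.n); rwa [Fin.val_last] at this
    have hs0 : s ≠ 0 := by
      intro h0
      rw [h0] at hsE
      have h1 : m.h xq = m.c 0 := by rw [← hsE, hE0]; exact hp₀val
      have h2 : m.c 0 < m.c (Fin.last m.n) := m.c_mono (by
        rw [Fin.lt_def]; simp only [Fin.val_zero, Fin.val_last]; omega)
      rw [hxval] at h1
      linarith
    have hsIoo : s ∈ Ioo 0 (2*Real.pi) := ⟨lt_of_le_of_ne hsIco.1 (Ne.symm hs0), hsIco.2⟩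
    have hscrit : IsLocalExtr g s := htrans₁ s (by rw [hsE]; exact hxext)
    obtain ⟨k, hk1, hkN, hkA⟩ := hAcover s ⟨hsIoo, hscrit⟩
    refine ⟨k, hk1, hkN, ?_⟩
    show g (A k) = _
    rw [hkA, hclast, ← hxval, ← hsE]
  have hctx : StradCtx v m.n N (Cfun m) (Rfun m) :=
    ⟨hn, hCmono, hR1, hR2, hv0, hvN, hvmid, hvuniq, hvtop⟩
  refine ⟨N, v, hctx, ?_⟩
  intro i
  have hi : (i : ℕ) < m.n := i.isLt
  have hRr : Rfun m i.val = m.midpt i := by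
    simp only [Rfun, dif_pos hi, Fin.eta]
  set r : ℝ := Rfun m i.val with hrdef
  have harc_mono : ∀ k, k ≤ N →
      StrictMonoOn g (Icc (A k) (A (k+1))) ∨ StrictAntiOn g (Icc (A k) (A (k+1))) := by
    intro k hk
    apply strict_of_no_extr hgc (hAlt k (k+1) (by omega) (by omega))
    intro t ht hext
    exact hAnogap k hk t ht.1 ht.2 ⟨harcsub k hk ht, hext⟩
  have hABlt : ∀ k, k ≤ N → A k < A (k+1) := fun k hk => hAlt k (k+1) (by omega) (by omega)
  have harcZ : ∀ k, k ≤ N →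
      (strB v r k → ∃ t, (t ∈ Ioo (A k) (A (k+1)) ∧ g t = r) ∧
        ∀ t', t' ∈ Ioo (A k) (A (k+1)) → g t' = r → t' = t) ∧
      (¬ strB v r k → ∀ t ∈ Ioo (A k) (A (k+1)), g t ≠ r) := by
    intro k hk
    have hle := (hABlt k hk).le
    have hmemL : A k ∈ Icc (A k) (A (k+1)) := left_mem_Icc.2 hle
    have hmemR : A (k+1) ∈ Icc (A k) (A (k+1)) := right_mem_Icc.2 hle
    rcases harc_mono k hk with hM | hM
    · have hvv : v k < v (k+1) := hM hmemL hmemR (hABlt k hk)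
      have hbound : ∀ t ∈ Ioo (A k) (A (k+1)), v k < g t ∧ g t < v (k+1) := by
        intro t ht
        exact ⟨hM hmemL (Ioo_subset_Icc_self ht) ht.1, hM (Ioo_subset_Icc_self ht) hmemR ht.2⟩
      constructor
      · intro hstr
        have hro : v k < r ∧ r < v (k+1) := by
          rcases (show (v k < r ∧ r < v (k+1)) ∨ (v (k+1) < r ∧ r < v k) from hstr) with
            ⟨h1, h2⟩ | ⟨h1, h2⟩
          · exact ⟨h1, h2⟩
          · exact absurd hvv (not_lt.2 (by linarith))
        obtain ⟨t, htI, htg⟩ := intermediate_value_Ioo hle hgc.continuousOn ⟨hro.1, hro.2⟩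
        refine ⟨t, ⟨htI, htg⟩, ?_⟩
        intro t' htI' htg'
        exact hM.injOn (Ioo_subset_Icc_self htI') (Ioo_subset_Icc_self htI)
          (htg'.trans htg.symm)
      · intro hstr t ht htr
        apply hstr
        have hb := hbound t ht
        exact Or.inl ⟨by rw [← htr]; exact hb.1, by rw [← htr]; exact hb.2⟩
    · have hvv : v (k+1) < v k := hM hmemL hmemR (hABlt k hk)
      have hbound : ∀ t ∈ Ioo (A k) (A (k+1)), v (k+1) < g t ∧ g t < v k := by
        intro t ht
        exact ⟨hM (Ioo_subset_Icc_self ht) hmemR ht.2, hM hmemL (Ioo_subset_Icc_self ht) ht.1⟩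
      constructor
      · intro hstr
        have hro : v (k+1) < r ∧ r < v k := by
          rcases (show (v k < r ∧ r < v (k+1)) ∨ (v (k+1) < r ∧ r < v k) from hstr) with
            ⟨h1, h2⟩ | ⟨h1, h2⟩
          · exact absurd hvv (not_lt.2 (by linarith))
          · exact ⟨h1, h2⟩
        obtain ⟨t, htI, htg⟩ := intermediate_value_Ioo' hle hgc.continuousOn ⟨hro.1, hro.2⟩
        refine ⟨t, ⟨htI, htg⟩, ?_⟩
        intro t' htI' htg'
        exact hM.injOn (Ioo_subset_Icc_self htI') (Ioo_subset_Icc_self htI)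
          (htg'.trans htg.symm)
      · intro hstr t ht htr
        apply hstr
        have hb := hbound t ht
        exact Or.inr ⟨by rw [← htr]; exact hb.1, by rw [← htr]; exact hb.2⟩
  set τ : ℕ → ℝ := fun k =>
    if h : ∃ t, t ∈ Ioo (A k) (A (k+1)) ∧ g t = r then h.choose else 0 with hτdef
  have hτ : ∀ k, k ≤ N → strB v r k → τ k ∈ Ioo (A k) (A (k+1)) ∧ g (τ k) = r := by
    intro k hk hstr
    obtain ⟨t, ht, -⟩ := (harcZ k hk).1 hstr
    have hex : ∃ t, t ∈ Ioo (A k) (A (k+1)) ∧ g t = r := ⟨t, ht⟩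
    simp only [hτdef, dif_pos hex]
    exact hex.choose_spec
  have hτuniq : ∀ k, k ≤ N → strB v r k →
      ∀ t', t' ∈ Ioo (A k) (A (k+1)) → g t' = r → t' = τ k := by
    intro k hk hstr t' h1 h2
    obtain ⟨t, ht, huq⟩ := (harcZ k hk).1 hstr
    exact (huq t' h1 h2).trans (huq (τ k) (hτ k hk hstr).1 (hτ k hk hstr).2).symm
  set Z : Set ℝ := {t | t ∈ Ioo 0 (2*Real.pi) ∧ g t = r} with hZdef
  have hZE : K ∩ m.h ⁻¹' {r} = E '' Z := by
    ext x
    constructor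
    · rintro ⟨hxK, hxr⟩
      simp only [Set.mem_preimage, Set.mem_singleton_iff] at hxr
      obtain ⟨s, hsIco, hsE⟩ := hEsurj x hxK
      have hs0 : s ≠ 0 := by
        intro h0
        rw [h0] at hsE
        apply hctx.vne 0 (by omega) i.val hi
        show g (A 0) = Rfun m i.val
        rw [hA0, show g 0 = m.h (E 0) from rfl, hsE]
        exact hxr
      refine ⟨s, ⟨⟨lt_of_le_of_ne hsIco.1 (Ne.symm hs0), hsIco.2⟩, ?_⟩, hsE⟩
      show g s = r
      rw [show g s = m.h (E s) from rfl, hsE]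
      exact hxr
    · rintro ⟨t, ht, rfl⟩
      refine ⟨hEK t, ?_⟩
      simp only [Set.mem_preimage, Set.mem_singleton_iff]
      exact ht.2
  have hcnt1 : m.cnt i = Z.ncard := by
    show (K ∩ m.h ⁻¹' {m.midpt i}).ncard = Z.ncard
    rw [show m.midpt i = r from (hRr.symm.trans hrdef.symm), hZE]
    exact Set.ncard_image_of_injOn (hEinj.mono (fun t ht => Ioo_subset_Ico_self ht.1))
  set SF : Finset ℕ := (Finset.range (N+1)).filter (strB v r) with hSF
  have hZF : Z = ↑(SF.image τ) := by
    ext t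
    constructor
    · intro ht
      have htI := ht.1
      have htr := ht.2
      have h0F : (0:ℕ) ∈ (Finset.range (N+2)).filter (fun k => A k ≤ t) := by
        rw [Finset.mem_filter, Finset.mem_range]
        exact ⟨by omega, by rw [hA0]; exact htI.1.le⟩
      set F := (Finset.range (N+2)).filter (fun k => A k ≤ t) with hF
      have hFne : F.Nonempty := ⟨0, h0F⟩
      set k := F.max' hFne with hk
      have hkF : k ∈ F := F.max'_mem hFne
      rw [hF, Finset.mem_filter, Finset.mem_range] at hkF
      have hkN : k ≤ N := by
        rcases Nat.lt_or_ge k (N+1) with h | h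
        · omega
        · exfalso
          have hke : k = N+1 := by omega
          rw [hke, hAbig (N+1) (by omega)] at hkF
          exact absurd hkF.2 (not_le.2 htI.2)
      have htk1 : t < A (k+1) := by
        by_contra hcon
        have hmem : k + 1 ∈ F := by
          rw [hF, Finset.mem_filter, Finset.mem_range]
          exact ⟨by omega, not_lt.1 hcon⟩
        have hle := F.le_max' (k+1) hmem
        rw [← hk] at hle
        omega
      have hne0 : A k ≠ t := by
        intro he
        apply hctx.vne k (by omega) i.val hi
        show g (A k) = Rfun m i.val
        rw [he]
        exact htr
      have htIoo : t ∈ Ioo (A k) (A (k+1)) := ⟨lt_of_le_of_ne hkF.2 hne0, htk1⟩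
      have hstrk : strB v r k := by
        by_contra hstr
        exact (harcZ k hkN).2 hstr t htIoo htr
      rw [Finset.mem_coe, Finset.mem_image]
      refine ⟨k, ?_, (hτuniq k hkN hstrk t htIoo htr).symm⟩
      rw [hSF, Finset.mem_filter, Finset.mem_range]
      exact ⟨by omega, hstrk⟩
    · intro ht
      rw [Finset.mem_coe, Finset.mem_image] at ht
      obtain ⟨k, hkSF, rfl⟩ := ht
      rw [hSF, Finset.mem_filter, Finset.mem_range] at hkSF
      obtain ⟨hI, hg'⟩ := hτ k (by omega) hkSF.2
      exact ⟨harcsub k (by omega) hI, hg'⟩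
  have hinjτ : Set.InjOn τ ↑SF := by
    intro a ha b hb he
    rw [Finset.mem_coe, hSF, Finset.mem_filter, Finset.mem_range] at ha hb
    by_contra hne
    rcases Nat.lt_or_ge a b with h | h
    · have h1 := (hτ a (by omega) ha.2).1
      have h2 := (hτ b (by omega) hb.2).1
      have hle : A (a+1) ≤ A b := hAmono_le (a+1) b (by omega) (by omega)
      rw [he] at h1
      have e1 := h1.2
      have e2 := h2.1
      linarith
    · have h' : b < a := by omega
      have h1 := (hτ a (by omega) ha.2).1
      have h2 := (hτ b (by omega) hb.2).1
      have hle : A (b+1) ≤ A a := hAmono_le (b+1) a (by omega) (by omega)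
      rw [he] at h1
      have e1 := h1.1
      have e2 := h2.2
      linarith
  have hcard : Z.ncard = SF.card := by
    rw [hZF, Set.ncard_coe_finset, Finset.card_image_of_injOn hinjτ]
  have hchi : chiB v N r = SF.card := by
    rw [hSF]
    simp only [chiB]
  rw [hcnt1, hcard, hchi]




theorem knotmorse_main {K : Set S3} (hK : IsKnot K) (m : KnotMorse K) :
    m.trunk ^ 2 ≤ 2 * m.width := by
  rcases Nat.eq_zero_or_pos m.n with h0 | hn
  · have hiE : IsEmpty (Fin m.n) := ⟨fun i => absurd i.isLt (by omega)⟩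
    have ht : m.trunk = 0 := by
      show Finset.univ.sup (fun i => m.cnt i) = 0
      haveI := hiE
      rw [Finset.univ_eq_empty, Finset.sup_empty]
      rfl
    have hw : m.width = 0 := by
      show ∑ i : Fin m.n, m.cnt i = 0
      haveI := hiE
      rw [Finset.univ_eq_empty, Finset.sum_empty]
    rw [ht, hw]
    norm_num
  · obtain ⟨N, v, hctx, hcnt⟩ := knotmorse_key hK m hn
    have hnonempty : (Finset.univ : Finset (Fin m.n)).Nonempty := by
      rw [Finset.univ_nonempty_iff]
      exact ⟨⟨0, hn⟩⟩
    obtain ⟨i₀, -, hsup⟩ := Finset.exists_mem_eq_sup Finset.univ hnonempty (fun i => m.cnt i)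
    have htr : m.trunk = chiB v N (Rfun m i₀.val) := by
      show (Finset.univ.sup fun i => m.cnt i) = _
      rw [hsup]
      exact hcnt i₀
    have hwd : m.width = ∑ i ∈ Finset.range m.n, chiB v N (Rfun m i) := by
      show (∑ i : Fin m.n, m.cnt i) = _
      calc (∑ i : Fin m.n, m.cnt i)
          = ∑ i : Fin m.n, chiB v N (Rfun m i.val) :=
            Finset.sum_congr rfl (fun i _ => hcnt i)
        _ = ∑ i ∈ Finset.range m.n, chiB v N (Rfun m i) :=
            Fin.sum_univ_eq_sum_range (fun j => chiB v N (Rfun m j)) m.n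
    rw [htr, hwd]
    exact hctx.master i₀.val i₀.isLt

end PartD

/-- For any knot `K` in `S³`, `w(K) ≥ trunk(K)² / 2`. -/
theorem width_ge_trunk_sq_div_two (K : Set S3) (hK : IsKnot K) :
    ((knotTrunk K : ℝ)) ^ 2 / 2 ≤ (knotWidth K : ℝ) := by
  rcases isEmpty_or_nonempty (KnotMorse K) with he | hne
  · have h1 : knotWidth K = 0 := by
      rw [knotWidth]
      convert Nat.sInf_empty
      rw [Set.eq_empty_iff_forall_notMem]
      rintro w ⟨mm, -⟩
      exact he.false mm
    have h2 : knotTrunk K = 0 := by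
      rw [knotTrunk]
      convert Nat.sInf_empty
      rw [Set.eq_empty_iff_forall_notMem]
      rintro w ⟨mm, -⟩
      exact he.false mm
    rw [h1, h2]
    norm_num
  · obtain ⟨m₀⟩ := hne
    have hWne : {w | ∃ mm : KnotMorse K, mm.width = w}.Nonempty := ⟨m₀.width, m₀, rfl⟩
    have hmem : knotWidth K ∈ {w | ∃ mm : KnotMorse K, mm.width = w} := Nat.sInf_mem hWne
    obtain ⟨mmin, hmin⟩ := hmem
    have htle : knotTrunk K ≤ mmin.trunk := Nat.sInf_le ⟨mmin, rfl⟩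
    have hkey : mmin.trunk ^ 2 ≤ 2 * mmin.width := knotmorse_main hK mmin
    have h2 : (knotTrunk K) ^ 2 ≤ 2 * knotWidth K := by
      calc (knotTrunk K) ^ 2 ≤ mmin.trunk ^ 2 := Nat.pow_le_pow_left htle 2
        _ ≤ 2 * mmin.width := hkey
        _ = 2 * knotWidth K := by rw [hmin]
    rw [div_le_iff₀ (by norm_num : (0:ℝ) < 2)]
    have hcast : ((knotTrunk K : ℝ)) ^ 2 ≤ 2 * (knotWidth K : ℝ) := by
      exact_mod_cast h2
    linarith

end
end
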